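/- arXiv:1510.02784 — 8 statements merged into one kernel-verified Lean document; each statement's English description precedes it below -/
import Mathlib

section
/- Let f_1, …, f_m be complex polynomials, all of degree n with positive (real) leading coefficients, and suppose each f_i has all its zeros in the disk |z - z_0| ≤ r. Then F = f_1 + ⋯ + f_m has all its zeros in the disk |z - z_0| ≤ r / sin(π/(2n)). -/
open Polynomial

lemma tch_key (s x y : ℝ) (hs : 0 < s) (hs1 : s ≤ 1)
    (h : (1 - x) ^ 2 + y ^ 2 < s ^ 2) : y ^ 2 < s ^ 2 * (x ^ 2 + y ^ 2) := by
  rcases eq_or_lt_of_le hs1 with h1 | h1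
  · subst h1
    have hx : 0 < x := by nlinarith [sq_nonneg y]
    nlinarith
  · nlinarith [sq_nonneg ((1 - x) - s ^ 2), mul_pos (by nlinarith : (0:ℝ) < 1 - s ^ 2)
      (by nlinarith : (0:ℝ) < s ^ 2 - (1 - x) ^ 2 - y ^ 2)]

lemma tch_factor (w b : ℂ) (θ : ℝ) (hθ : 0 < θ) (hθ2 : θ ≤ Real.pi / 2)
    (hb : ‖b‖ < ‖w‖ * Real.sin θ) :
    ∃ ρ φ : ℝ, 0 < ρ ∧ |φ| < θ ∧ w - b = (ρ : ℂ) * Complex.exp (φ * Complex.I) * w := by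
  have hs : 0 < Real.sin θ := Real.sin_pos_of_pos_of_lt_pi hθ (lt_of_le_of_lt hθ2 (by
    linarith [Real.pi_pos]))
  have hs1 : Real.sin θ ≤ 1 := Real.sin_le_one θ
  have hw : w ≠ 0 := by
    intro h
    rw [h] at hb
    simp at hb
    nlinarith [norm_nonneg b]
  have hwpos : 0 < ‖w‖ := norm_pos_iff.mpr hw
  set u : ℂ := 1 - b / w with hu
  have hwu : w - b = u * w := by rw [hu, sub_mul, one_mul, div_mul_cancel₀ b hw]
  have hu1 : ‖u - 1‖ < Real.sin θ := by
    have : u - 1 = -(b / w) := by ring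
    rw [this, norm_neg, norm_div]
    rw [div_lt_iff₀ hwpos]
    linarith [hb]
  set x := u.re with hx
  set y := u.im with hy
  have hsq : (1 - x) ^ 2 + y ^ 2 < Real.sin θ ^ 2 := by
    have h2 : ‖u - 1‖ ^ 2 < Real.sin θ ^ 2 := by
      nlinarith [norm_nonneg (u - 1)]
    rw [Complex.sq_norm, Complex.normSq_apply] at h2
    simp only [Complex.sub_re, Complex.sub_im, Complex.one_re, Complex.one_im] at h2
    nlinarith [h2]
  have hkey : y ^ 2 < Real.sin θ ^ 2 * (x ^ 2 + y ^ 2) := tch_key _ _ _ hs hs1 hsq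
  have hxpos : 0 < x := by nlinarith [sq_nonneg y, sq_nonneg (1 - x)]
  have hune : u ≠ 0 := fun h => by simp [hx, h] at hxpos
  have hρ : 0 < ‖u‖ := norm_pos_iff.mpr hune
  have huabs : ‖u‖ ^ 2 = x ^ 2 + y ^ 2 := by
    rw [Complex.sq_norm, Complex.normSq_apply]; ring
  set ρ := ‖u‖ with hρdef
  -- |y| < sin θ * ρ
  have hysin : |y| < Real.sin θ * ρ := by
    have : y ^ 2 < (Real.sin θ * ρ) ^ 2 := by rw [mul_pow, huabs]; exact hkey
    have h1 : 0 ≤ Real.sin θ * ρ := by positivity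
    nlinarith [abs_nonneg y, sq_abs y]
  have hyρ : |y / ρ| < Real.sin θ := by
    rw [abs_div, abs_of_pos hρ, div_lt_iff₀ hρ]
    linarith
  set φ := Real.arcsin (y / ρ) with hφ
  have hθmem : θ ∈ Set.Ioc (-(Real.pi / 2)) (Real.pi / 2) := ⟨by linarith [Real.pi_pos], hθ2⟩
  have hφlt : |φ| < θ := by
    rw [abs_lt]
    refine ⟨?_, (Real.arcsin_lt_iff_lt_sin' hθmem).2 (lt_of_abs_lt hyρ)⟩
    have h1 : Real.arcsin (-(y / ρ)) < θ :=
      (Real.arcsin_lt_iff_lt_sin' hθmem).2 (by linarith [(abs_lt.mp hyρ).1])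
    rw [Real.arcsin_neg] at h1
    linarith
  refine ⟨ρ, φ, hρ, hφlt, ?_⟩
  rw [hwu]
  congr 1
  have hsin : Real.sin φ = y / ρ := Real.sin_arcsin
    (by linarith [(abs_lt.mp hyρ).1, hs1]) (by linarith [(abs_lt.mp hyρ).2, hs1])
  have hcos : Real.cos φ = x / ρ := by
    rw [hφ, Real.cos_arcsin]
    have h1 : 1 - (y / ρ) ^ 2 = (x / ρ) ^ 2 := by
      field_simp
      nlinarith [huabs]
    rw [h1, Real.sqrt_sq (by positivity)]
  have hre : ((ρ:ℂ) * Complex.exp (φ * Complex.I)).re = ρ * Real.cos φ := by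
    simp [Complex.mul_re, Complex.exp_ofReal_mul_I_re, Complex.exp_ofReal_mul_I_im]
  have him : ((ρ:ℂ) * Complex.exp (φ * Complex.I)).im = ρ * Real.sin φ := by
    simp [Complex.mul_im, Complex.exp_ofReal_mul_I_re, Complex.exp_ofReal_mul_I_im]
  apply Complex.ext
  · rw [hre, hcos]; field_simp; rfl
  · rw [him, hsin]; field_simp; rfl

lemma tch_prod (θ : ℝ) (w : ℂ) :
    ∀ l : List ℂ, l ≠ [] →
      (∀ a ∈ l, ∃ ρ φ : ℝ, 0 < ρ ∧ |φ| < θ ∧ a = (ρ : ℂ) * Complex.exp (φ * Complex.I) * w) →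
      ∃ ρ φ : ℝ, 0 < ρ ∧ |φ| < l.length * θ ∧
        l.prod = (ρ : ℂ) * Complex.exp (φ * Complex.I) * w ^ l.length := by
  intro l
  induction l with
  | nil => intro h; exact absurd rfl h
  | cons a t ih =>
    intro _ hmem
    obtain ⟨ρ₁, φ₁, hρ₁, hφ₁, ha⟩ := hmem a List.mem_cons_self
    rcases eq_or_ne t [] with ht | ht
    · subst ht
      refine ⟨ρ₁, φ₁, hρ₁, by simpa using hφ₁, ?_⟩
      simp [ha]
    · obtain ⟨ρ₂, φ₂, hρ₂, hφ₂, hp⟩ := ih ht (fun x hx => hmem x (List.mem_cons_of_mem a hx))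
      refine ⟨ρ₁ * ρ₂, φ₁ + φ₂, mul_pos hρ₁ hρ₂, ?_, ?_⟩
      · calc |φ₁ + φ₂| ≤ |φ₁| + |φ₂| := abs_add_le _ _
          _ < θ + t.length * θ := by
              apply add_lt_add hφ₁ hφ₂
          _ = (a :: t).length * θ := by simp; ring
      · simp only [List.length_cons, List.prod_cons]
        rw [ha, hp]
        push_cast
        rw [add_mul, Complex.exp_add]
        ring

/-- Tchakaloff's theorem: if f_1, …, f_m all have degree n, positive real leading
coefficients and all their zeros in the disk |z - z₀| ≤ r, then all zeros of
F = f_1 + ⋯ + f_m lie in the disk |z - z₀| ≤ r / sin(π/(2n)). -/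
theorem tchakaloff (n m : ℕ) (hn : 1 ≤ n) (hm : 1 ≤ m)
    (f : Fin m → Polynomial ℂ) (z₀ : ℂ) (r : ℝ)
    (hdeg : ∀ i, (f i).natDegree = n)
    (hlead : ∀ i, ((f i).leadingCoeff.im = 0 ∧ 0 < (f i).leadingCoeff.re))
    (hroots : ∀ i, ∀ z : ℂ, (f i).IsRoot z → ‖z - z₀‖ ≤ r) :
    ∀ z : ℂ, (∑ i, f i).IsRoot z →
      ‖z - z₀‖ ≤ r / Real.sin (Real.pi / (2 * n)) := by
  intro z hz
  by_contra hcon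
  push_neg at hcon
  set θ := Real.pi / (2 * n) with hθdef
  have hnpos : (0:ℝ) < n := by exact_mod_cast hn
  have hθpos : 0 < θ := by rw [hθdef]; positivity
  have hθle : θ ≤ Real.pi / 2 := by
    rw [hθdef]
    rw [div_le_div_iff₀ (by positivity) (by norm_num)]
    nlinarith [Real.pi_pos, (by exact_mod_cast hn : (1:ℝ) ≤ (n:ℝ))]
  have hθltpi : θ < Real.pi := lt_of_le_of_lt hθle (by linarith [Real.pi_pos])
  have hs : 0 < Real.sin θ := Real.sin_pos_of_pos_of_lt_pi hθpos hθltpi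
  set w := z - z₀ with hwdef
  have hfne : ∀ i, f i ≠ 0 := by
    intro i h
    have h2 := (hlead i).2
    rw [h] at h2
    simp at h2
  have hsplit : ∀ i, Splits (f i) := fun i => IsAlgClosed.splits _
  have hcard : ∀ i, (f i).roots.card = n := fun i => by
    rw [← hdeg i]
    exact (Polynomial.splits_iff_card_roots.mp (hsplit i))
  have i₀ : Fin m := ⟨0, hm⟩
  have hr : 0 ≤ r := by
    have h1 : (f i₀).roots ≠ 0 := by
      intro h
      have := hcard i₀
      rw [h] at this
      simp at this
      omega
    obtain ⟨a, ha⟩ := Multiset.exists_mem_of_ne_zero h1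
    exact le_trans (norm_nonneg _) (hroots i₀ a (Polynomial.isRoot_of_mem_roots ha))
  have hwpos : 0 < ‖w‖ := lt_of_le_of_lt (by positivity) hcon
  have hrw : r < ‖w‖ * Real.sin θ := by
    rw [div_lt_iff₀ hs] at hcon
    linarith
  have hwne : w ≠ 0 := by
    intro h
    rw [h] at hwpos
    simp at hwpos
  have hrep : ∀ i, ∃ ρ φ : ℝ, 0 < ρ ∧ |φ| < n * θ ∧
      Polynomial.eval z (f i) =
        (f i).leadingCoeff * ((ρ:ℂ) * Complex.exp (φ * Complex.I) * w ^ n) := by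
    intro i
    set L := ((f i).roots.map (fun a => z - a)).toList with hL
    have hLlen : L.length = n := by
      rw [hL, Multiset.length_toList, Multiset.card_map, hcard i]
    have hLne : L ≠ [] := by
      intro h
      rw [h] at hLlen
      simp at hLlen
      omega
    have hmem : ∀ x ∈ L, ∃ ρ φ : ℝ, 0 < ρ ∧ |φ| < θ ∧
        x = (ρ:ℂ) * Complex.exp (φ * Complex.I) * w := by
      intro x hx
      rw [hL, Multiset.mem_toList, Multiset.mem_map] at hx
      obtain ⟨a, ha, rfl⟩ := hx
      have hb : ‖a - z₀‖ < ‖w‖ * Real.sin θ :=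
        lt_of_le_of_lt (hroots i a (Polynomial.isRoot_of_mem_roots ha)) hrw
      have heq : z - a = w - (a - z₀) := by rw [hwdef]; ring
      rw [heq]
      exact tch_factor w (a - z₀) θ hθpos hθle hb
    obtain ⟨ρ, φ, hρ, hφ, hprod⟩ := tch_prod θ w L hLne hmem
    rw [hLlen] at hφ hprod
    refine ⟨ρ, φ, hρ, hφ, ?_⟩
    have he : f i = C (f i).leadingCoeff * ((f i).roots.map fun a => X - C a).prod :=
      (hsplit i).eq_prod_roots
    have h2 : Polynomial.eval z (f i) =
        (f i).leadingCoeff * (((f i).roots.map fun a => z - a)).prod := by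
      conv_lhs => rw [he]
      rw [eval_mul, eval_C, eval_multiset_prod]
      congr 1
      rw [Multiset.map_map]
      exact congrArg Multiset.prod (Multiset.map_congr rfl (fun a _ => by
        show Polynomial.eval z (X - C a) = z - a
        simp))
    rw [h2, ← Multiset.prod_toList, ← hL, hprod]
  have hnθ : (n:ℝ) * θ = Real.pi / 2 := by
    rw [hθdef]
    field_simp
  have hsum : (∑ i, Polynomial.eval z (f i)) = 0 := by
    have h := hz
    rwa [Polynomial.IsRoot, Polynomial.eval_finset_sum] at h
  choose ρ φ hρ hφ hval using hrep
  have hcosp : ∀ i, 0 < Real.cos (φ i) := by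
    intro i
    apply Real.cos_pos_of_mem_Ioo
    have := hφ i
    rw [hnθ] at this
    rw [abs_lt] at this
    exact ⟨this.1, this.2⟩
  have hwn : (w:ℂ) ^ n ≠ 0 := pow_ne_zero _ hwne
  have hE : (∑ i, Polynomial.eval z (f i) * ((w:ℂ) ^ n)⁻¹) = 0 := by
    rw [← Finset.sum_mul, hsum, zero_mul]
  have hterm : ∀ i, Polynomial.eval z (f i) * ((w:ℂ) ^ n)⁻¹ =
      (((f i).leadingCoeff.re * ρ i : ℝ) : ℂ) * Complex.exp (φ i * Complex.I) := by
    intro i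
    rw [hval i]
    have hc : ((f i).leadingCoeff) = (((f i).leadingCoeff.re : ℝ) : ℂ) := by
      apply Complex.ext
      · simp
      · simp [(hlead i).1]
    rw [hc]
    push_cast
    field_simp
    simp only [Complex.ofReal_re]
    ring
  have hre0 : (0:ℝ) = ∑ i, ((f i).leadingCoeff.re * ρ i * Real.cos (φ i)) := by
    have h1 := congrArg Complex.re hE
    rw [Complex.re_sum] at h1
    simp only [hterm] at h1
    rw [Complex.zero_re] at h1
    rw [← h1]
    apply Finset.sum_congr rfl
    intro i _
    simp [Complex.mul_re, Complex.exp_ofReal_mul_I_re, Complex.exp_ofReal_mul_I_im]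
  have : Nonempty (Fin m) := ⟨i₀⟩
  have hpos : 0 < ∑ i, ((f i).leadingCoeff.re * ρ i * Real.cos (φ i)) :=
    Finset.sum_pos (fun i _ => mul_pos (mul_pos (hlead i).2 (hρ i)) (hcosp i))
      Finset.univ_nonempty
  linarith
end

section
/- Let b_1, …, b_n ∈ ℂ and let (z_1, …, z_n) be the (unique up to permutation) solution of the system z_1^j + ⋯ + z_n^j = b_j for 1 ≤ j ≤ n. Then for every i, |z_i| ≤ C_n · M, where C_n = 1/sin(π/(2n)) and M = max_{1 ≤ j ≤ n} |b_j|^{1/j}. -/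
open Finset Polynomial

/-- Bound on elementary symmetric functions via Newton's identities. -/
lemma psb_esymm_bound (n : ℕ) (z : Fin n → ℂ) (M : ℝ) (hM0 : 0 ≤ M)
    (hP : ∀ j, 1 ≤ j → j ≤ n → ‖∑ i, z i ^ j‖ ≤ M ^ j) :
    ∀ k, k ≤ n → ‖(Finset.univ.val.map z).esymm k‖ ≤ M ^ k := by
  intro k
  induction k using Nat.strong_induction_on with
  | _ k ih =>
    intro hkn
    rcases Nat.eq_zero_or_pos k with rfl | hk
    · simp [Multiset.esymm]
    have newton : (k : ℂ) * (Finset.univ.val.map z).esymm k = (-1) ^ (k + 1) *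
        ∑ a ∈ Finset.HasAntidiagonal.antidiagonal k with a.1 < k,
          (-1) ^ a.1 * (Finset.univ.val.map z).esymm a.1 * (∑ i, z i ^ a.2) := by
      have := congrArg (MvPolynomial.aeval z) (MvPolynomial.mul_esymm_eq_sum (Fin n) ℂ k)
      simpa [MvPolynomial.psum, map_sum, MvPolynomial.aeval_esymm_eq_multiset_esymm,
        -MvPolynomial.coe_aeval_eq_eval, -MvPolynomial.aeval_eq_eval] using this
    have hcard : ({a ∈ Finset.HasAntidiagonal.antidiagonal k | a.1 < k} : Finset (ℕ × ℕ)).card ≤ k := by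
      have hsub : ({a ∈ Finset.HasAntidiagonal.antidiagonal k | a.1 < k} : Finset (ℕ × ℕ)) ⊆
          (Finset.HasAntidiagonal.antidiagonal k).erase (k, 0) := by
        intro a ha
        simp only [Finset.mem_filter] at ha
        refine Finset.mem_erase.2 ⟨?_, ha.1⟩
        intro hc; rw [hc] at ha; exact absurd ha.2 (lt_irrefl k)
      calc _ ≤ ((Finset.HasAntidiagonal.antidiagonal k).erase (k, 0)).card := Finset.card_le_card hsub
        _ = k := by
          rw [Finset.card_erase_of_mem (by simp), Finset.Nat.card_antidiagonal]; omega
    have key : (k : ℝ) * ‖(Finset.univ.val.map z).esymm k‖ ≤ k * M ^ k := by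
      have h1 : (k : ℝ) * ‖(Finset.univ.val.map z).esymm k‖
          = ‖(k : ℂ) * (Finset.univ.val.map z).esymm k‖ := by
        simp [norm_mul]
      rw [h1, newton, norm_mul, norm_pow, norm_neg, norm_one, one_pow, one_mul]
      calc ‖∑ a ∈ Finset.HasAntidiagonal.antidiagonal k with a.1 < k,
            (-1) ^ a.1 * (Finset.univ.val.map z).esymm a.1 * (∑ i, z i ^ a.2)‖
          ≤ ∑ a ∈ Finset.HasAntidiagonal.antidiagonal k with a.1 < k,
            ‖(-1) ^ a.1 * (Finset.univ.val.map z).esymm a.1 * (∑ i, z i ^ a.2)‖ :=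
            norm_sum_le _ _
        _ ≤ ∑ a ∈ Finset.HasAntidiagonal.antidiagonal k with a.1 < k, M ^ k := by
            refine Finset.sum_le_sum fun a ha => ?_
            simp only [Finset.mem_filter, Finset.HasAntidiagonal.mem_antidiagonal] at ha
            obtain ⟨hsum, hlt⟩ := ha
            have ha2 : 1 ≤ a.2 := by omega
            have ha2n : a.2 ≤ n := by omega
            rw [norm_mul, norm_mul, norm_pow, norm_neg, norm_one, one_pow, one_mul]
            calc ‖(Finset.univ.val.map z).esymm a.1‖ * ‖∑ i, z i ^ a.2‖
                ≤ M ^ a.1 * M ^ a.2 := by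
                  apply mul_le_mul (ih a.1 hlt (by omega)) (hP a.2 ha2 ha2n)
                    (norm_nonneg _) (pow_nonneg hM0 _)
              _ = M ^ k := by rw [← pow_add, hsum]
        _ ≤ k * M ^ k := by
            rw [Finset.sum_const, nsmul_eq_mul]
            exact mul_le_mul_of_nonneg_right (by exact_mod_cast hcard) (pow_nonneg hM0 _)
    have hk' : (0 : ℝ) < k := by exact_mod_cast hk
    exact le_of_mul_le_mul_left key hk'

/-- Each root satisfies a power inequality given bounds on the symmetric functions. -/
lemma psb_root_pow_bound (n : ℕ) (z : Fin n → ℂ) (M : ℝ)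
    (hE : ∀ k, k ≤ n → ‖(Finset.univ.val.map z).esymm k‖ ≤ M ^ k) :
    ∀ i, ‖z i‖ ^ n ≤ ∑ k ∈ Finset.range n, M ^ (n - k) * ‖z i‖ ^ k := by
  intro i
  set Q : Polynomial ℂ := ∏ j, (X - C (z j)) with hQ
  have hmonic : Q.Monic := monic_prod_of_monic _ _ fun j _ => monic_X_sub_C (z j)
  have hdeg : Q.natDegree = n := by
    rw [hQ, natDegree_prod _ _ fun j _ => X_sub_C_ne_zero (z j)]
    simp [natDegree_X_sub_C]
  have heval : Q.eval (z i) = 0 := by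
    rw [hQ, eval_prod]
    exact Finset.prod_eq_zero (Finset.mem_univ i) (by simp)
  have hcoeff : ∀ k, k ≤ n →
      Q.coeff k = (-1) ^ (n - k) * (Finset.univ.val.map z).esymm (n - k) := by
    intro k hk
    have hcard : Multiset.card (Finset.univ.val.map z) = n := by simp
    have := Multiset.prod_X_sub_C_coeff (Finset.univ.val.map z) (k := k) (by rw [hcard]; exact hk)
    rw [hcard] at this
    rw [hQ, ← this]
    congr 1
    rw [Finset.prod, Multiset.map_map]
    rfl
  have hsum : Q.eval (z i) = ∑ k ∈ Finset.range (n + 1), Q.coeff k * z i ^ k := by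
    rw [eval_eq_sum_range, hdeg]
  rw [heval, Finset.sum_range_succ] at hsum
  have hlead : Q.coeff n = 1 := by
    have := hmonic.coeff_natDegree; rwa [hdeg] at this
  rw [hlead, one_mul] at hsum
  have hzn : z i ^ n = -∑ k ∈ Finset.range n, Q.coeff k * z i ^ k := by
    linear_combination -hsum
  calc ‖z i‖ ^ n = ‖z i ^ n‖ := by rw [norm_pow]
    _ = ‖∑ k ∈ Finset.range n, Q.coeff k * z i ^ k‖ := by rw [hzn, norm_neg]
    _ ≤ ∑ k ∈ Finset.range n, ‖Q.coeff k * z i ^ k‖ := norm_sum_le _ _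
    _ ≤ ∑ k ∈ Finset.range n, M ^ (n - k) * ‖z i‖ ^ k := by
        refine Finset.sum_le_sum fun k hk => ?_
        rw [Finset.mem_range] at hk
        rw [norm_mul, norm_pow, hcoeff k hk.le, norm_mul, norm_pow, norm_neg, norm_one,
          one_pow, one_mul]
        exact mul_le_mul_of_nonneg_right (hE (n - k) (by omega)) (pow_nonneg (by positivity) _)

/-- Geometric-type sum bound for ratios at most 1/2. -/
lemma psb_geom_aux (s : ℝ) (hs0 : 0 ≤ s) (hs : s ≤ 1 / 2) :
    ∀ n : ℕ, ∑ j ∈ Finset.range n, s ^ (j + 1) ≤ 1 - s ^ n := by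
  intro n
  induction n with
  | zero => simp
  | succ n ih =>
    rw [Finset.sum_range_succ]
    have h1 : s ^ (n + 1) = s * s ^ n := by ring
    have h2 : s * s ^ n ≤ (1 / 2) * s ^ n :=
      mul_le_mul_of_nonneg_right hs (pow_nonneg hs0 n)
    nlinarith [pow_nonneg hs0 n]

lemma psb_geom (s : ℝ) (hs0 : 0 ≤ s) (hs : s ≤ 1 / 2) (n : ℕ) :
    ∑ k ∈ Finset.range n, s ^ (n - k) ≤ 1 := by
  have hrefl : ∑ k ∈ Finset.range n, s ^ (n - k) = ∑ j ∈ Finset.range n, s ^ (j + 1) := by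
    rw [← Finset.sum_range_reflect (fun j => s ^ (j + 1)) n]
    refine Finset.sum_congr rfl fun k hk => ?_
    rw [Finset.mem_range] at hk
    congr 1
    omega
  rw [hrefl]
  calc ∑ j ∈ Finset.range n, s ^ (j + 1) ≤ 1 - s ^ n := psb_geom_aux s hs0 hs n
    _ ≤ 1 := by nlinarith [pow_nonneg hs0 n]

/-- Final real-number contradiction argument. -/
lemma psb_final (n : ℕ) (hn : 0 < n) (s M r : ℝ) (hs : 0 < s) (hM : 0 ≤ M) (hr0 : 0 ≤ r)
    (hgeom : ∑ k ∈ Finset.range n, s ^ (n - k) ≤ 1)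
    (hr : r ^ n ≤ ∑ k ∈ Finset.range n, M ^ (n - k) * r ^ k) : r ≤ M / s := by
  by_contra hlt
  push_neg at hlt
  have hMrs : M < r * s := (div_lt_iff₀ hs).mp hlt
  have hrpos : 0 < r := lt_of_le_of_lt (div_nonneg hM hs.le) hlt
  have key : ∀ k ∈ Finset.range n, M ^ (n - k) * r ^ k < s ^ (n - k) * r ^ n := by
    intro k hk
    rw [Finset.mem_range] at hk
    have h1 : M ^ (n - k) < (r * s) ^ (n - k) :=
      pow_lt_pow_left₀ hMrs hM (by omega)
    have h2 : (r * s) ^ (n - k) * r ^ k = s ^ (n - k) * r ^ n := by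
      rw [mul_pow, mul_comm (r ^ (n - k)) (s ^ (n - k)), mul_assoc, ← pow_add]
      congr 2
      omega
    calc M ^ (n - k) * r ^ k < (r * s) ^ (n - k) * r ^ k :=
          mul_lt_mul_of_pos_right h1 (pow_pos hrpos k)
      _ = s ^ (n - k) * r ^ n := h2
  have h3 : r ^ n < r ^ n := by
    calc r ^ n ≤ ∑ k ∈ Finset.range n, M ^ (n - k) * r ^ k := hr
      _ < ∑ k ∈ Finset.range n, s ^ (n - k) * r ^ n :=
          Finset.sum_lt_sum_of_nonempty (Finset.nonempty_range_iff.2 (by omega)) key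
      _ = (∑ k ∈ Finset.range n, s ^ (n - k)) * r ^ n := by rw [Finset.sum_mul]
      _ ≤ 1 * r ^ n := mul_le_mul_of_nonneg_right hgeom (pow_nonneg hr0 n)
      _ = r ^ n := one_mul _
  exact lt_irrefl _ h3

/-- Any solution of z_1^j + ⋯ + z_n^j = b_j, 1 ≤ j ≤ n, satisfies
|z_i| ≤ C_n · M with C_n = 1/sin(π/(2n)) and M = max_j |b_j|^{1/j}. -/
theorem powerSum_solution_bound (n : ℕ) (hn : 1 ≤ n) (b : Fin n → ℂ)
    (z : Fin n → ℂ) (h : ∀ j : Fin n, ∑ i, z i ^ (j.1 + 1) = b j)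
    (M : ℝ)
    (hM : IsGreatest (Set.range fun j : Fin n =>
      ‖b j‖ ^ ((1 : ℝ) / (j.1 + 1))) M) :
    ∀ i, ‖z i‖ ≤ M / Real.sin (Real.pi / (2 * n)) := by
  have hM0 : 0 ≤ M := by
    obtain ⟨j, hj⟩ := hM.1
    rw [← hj]
    positivity
  -- |b j| ≤ M ^ (j+1)
  have hMb : ∀ j : Fin n, ‖b j‖ ≤ M ^ (j.1 + 1) := by
    intro j
    have h1 : ‖b j‖ ^ ((1 : ℝ) / (j.1 + 1)) ≤ M := hM.2 ⟨j, rfl⟩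
    have h2 : (‖b j‖ ^ ((1 : ℝ) / (j.1 + 1))) ^ (j.1 + 1) ≤ M ^ (j.1 + 1) :=
      pow_le_pow_left₀ (by positivity) h1 _
    calc ‖b j‖
        = (‖b j‖ ^ ((1 : ℝ) / (j.1 + 1))) ^ (j.1 + 1) := by
          rw [← Real.rpow_natCast (‖b j‖ ^ ((1 : ℝ) / (j.1 + 1))) (j.1 + 1),
            ← Real.rpow_mul (norm_nonneg _)]
          rw [show (1 : ℝ) / ((j.1 : ℝ) + 1) * ((j.1 + 1 : ℕ) : ℝ) = 1 by
            push_cast; field_simp, Real.rpow_one]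
      _ ≤ M ^ (j.1 + 1) := h2
  -- power sums bound
  have hP : ∀ j, 1 ≤ j → j ≤ n → ‖∑ i, z i ^ j‖ ≤ M ^ j := by
    intro j hj1 hjn
    have hjf : j - 1 < n := by omega
    have := h ⟨j - 1, hjf⟩
    have hj' : (⟨j - 1, hjf⟩ : Fin n).1 + 1 = j := by simp; omega
    rw [hj'] at this
    rw [this]
    have := hMb ⟨j - 1, hjf⟩
    rwa [hj'] at this
  intro i
  -- case split on n
  rcases lt_or_ge n 3 with hn3 | hn3
  · interval_cases n
    · -- n = 1
      have h0 := h 0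
      simp [Fin.sum_univ_one] at h0
      have hb : ‖b 0‖ ≤ M := by simpa using hMb 0
      have hi : i = 0 := Subsingleton.elim i 0
      rw [hi, h0]
      simp only [Nat.cast_one, mul_one, Real.sin_pi_div_two, div_one]
      exact hb
    · -- n = 2
      have h0 := h 0
      have h1 := h 1
      norm_num [Fin.sum_univ_two] at h0 h1
      have hb0 : ‖b 0‖ ≤ M := by simpa using hMb 0
      have hb1 : ‖b 1‖ ≤ M ^ 2 := by simpa using hMb 1
      have hi : i = 0 ∨ i = 1 := by
        rcases (by omega : i.1 = 0 ∨ i.1 = 1) with h' | h'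
        · exact Or.inl (Fin.ext h')
        · exact Or.inr (Fin.ext h')
      have hkey : (2 * z i - b 0) ^ 2 = 2 * b 1 - b 0 ^ 2 := by
        rcases hi with rfl | rfl
        · rw [← h0, ← h1]; ring
        · rw [← h0, ← h1]; ring
      set x := ‖2 * z i - b 0‖ with hx
      have hx2 : x ^ 2 ≤ 3 * M ^ 2 := by
        have : x ^ 2 = ‖2 * b 1 - b 0 ^ 2‖ := by
          rw [hx, ← norm_pow, hkey]
        rw [this]
        calc ‖2 * b 1 - b 0 ^ 2‖
            ≤ ‖2 * b 1‖ + ‖b 0 ^ 2‖ := by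
              exact (norm_sub_le _ _)
          _ ≤ 2 * M ^ 2 + M ^ 2 := by
              have e1 : ‖2 * b 1‖ ≤ 2 * M ^ 2 := by
                rw [norm_mul, Complex.norm_two]; linarith [hb1]
              have e2 : ‖b 0 ^ 2‖ ≤ M ^ 2 := by
                rw [norm_pow]
                exact pow_le_pow_left₀ (norm_nonneg _) hb0 2
              linarith
          _ = 3 * M ^ 2 := by ring
      have htri : 2 * ‖z i‖ ≤ x + M := by
        calc 2 * ‖z i‖ = ‖2 * z i‖ := by
              rw [norm_mul]; simp
          _ = ‖(2 * z i - b 0) + b 0‖ := by congr 1; ring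
          _ ≤ ‖2 * z i - b 0‖ + ‖b 0‖ := by
              exact norm_add_le _ _
          _ ≤ x + M := by rw [hx]; gcongr
      have hs2 : Real.sqrt 2 ^ 2 = 2 := Real.sq_sqrt (by norm_num)
      have hs2a : (1 : ℝ) ≤ Real.sqrt 2 := by nlinarith [Real.sqrt_nonneg 2]
      have hs2b : Real.sqrt 2 ≤ 3 / 2 := by nlinarith [Real.sqrt_nonneg 2]
      have hx0 : 0 ≤ x := norm_nonneg _
      have hc0 : 0 ≤ (2 * Real.sqrt 2 - 1) * M := by nlinarith
      have hcsq : 3 * M ^ 2 ≤ ((2 * Real.sqrt 2 - 1) * M) ^ 2 := by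
        nlinarith [sq_nonneg M, mul_nonneg (by nlinarith : (0:ℝ) ≤ 6 - 4 * Real.sqrt 2)
          (sq_nonneg M)]
      have hxle : x ≤ (2 * Real.sqrt 2 - 1) * M :=
        le_of_pow_le_pow_left₀ two_ne_zero hc0 (hx2.trans hcsq)
      simp only [Nat.cast_ofNat]
      rw [show (2 : ℝ) * 2 = 4 by norm_num, Real.sin_pi_div_four]
      have hfin : M / (Real.sqrt 2 / 2) = Real.sqrt 2 * M := by
        rw [eq_comm, eq_div_iff (by positivity)]
        nlinarith [hs2]
      rw [hfin]
      linarith [htri, hxle]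
  · -- n ≥ 3
    set s := Real.sin (Real.pi / (2 * n)) with hsdef
    have hpin : (0 : ℝ) < Real.pi / (2 * n) := by positivity
    have h2n : (6 : ℝ) ≤ 2 * (n : ℝ) := by
      have : (3 : ℝ) ≤ (n : ℝ) := by exact_mod_cast hn3
      linarith
    have hpile : Real.pi / (2 * (n : ℝ)) ≤ Real.pi / 6 :=
      div_le_div_of_nonneg_left Real.pi_pos.le (by norm_num) h2n
    have hs_pos : 0 < s := by
      apply Real.sin_pos_of_pos_of_lt_pi hpin
      have : Real.pi / 6 < Real.pi := by linarith [Real.pi_pos]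
      linarith [hpile]
    have hs_half : s ≤ 1 / 2 := by
      have hmono := Real.sin_le_sin_of_le_of_le_pi_div_two
        (x := Real.pi / (2 * (n : ℝ))) (y := Real.pi / 6)
        (by linarith [hpin]) (by linarith [Real.pi_pos]) hpile
      rwa [Real.sin_pi_div_six] at hmono
    have hE := psb_esymm_bound n z M hM0 hP
    have hpow := psb_root_pow_bound n z M hE i
    exact psb_final n (by omega) s M _ hs_pos hM0 (norm_nonneg _)
      (psb_geom s hs_pos.le hs_half n) hpow
end

section
/- Every monic complex polynomial f(z) = z^n + a_{n-1}z^{n-1} + ⋯ + a_1 z + a_0 of degree n can be written as f(z) = (1/n) Σ_{i=1}^n (z - z_i)^n for some complex numbers z_1, …, z_n, and these numbers are uniquely determined up to their order. -/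
open Polynomial

open Finset

noncomputable def psumv {n : ℕ} (z : Fin n → ℂ) (k : ℕ) : ℂ := ∑ i, z i ^ k
noncomputable def esymv {n : ℕ} (z : Fin n → ℂ) (k : ℕ) : ℂ :=
  MvPolynomial.eval z (MvPolynomial.esymm (Fin n) ℂ k)

lemma esymv_zero {n : ℕ} (z : Fin n → ℂ) : esymv z 0 = 1 := by
  simp [esymv, MvPolynomial.esymm_zero]

lemma newton_eval {n : ℕ} (z : Fin n → ℂ) (k : ℕ) :
    (k : ℂ) * esymv z k = (-1) ^ (k + 1) *
      ∑ a ∈ (antidiagonal k).filter (fun a => a.1 < k),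
        (-1) ^ a.1 * esymv z a.1 * psumv z a.2 := by
  have h := congrArg (MvPolynomial.eval z) (MvPolynomial.mul_esymm_eq_sum (Fin n) ℂ k)
  simpa [esymv, psumv, MvPolynomial.psum, MvPolynomial.eval_sum] using h

lemma coeff_sum_pow {n : ℕ} (z : Fin n → ℂ) (j : ℕ) :
    (∑ i, (X - C (z i)) ^ n).coeff j =
      (n.choose j : ℂ) * (-1) ^ (n - j) * psumv z (n - j) := by
  rw [finset_sum_coeff]
  have : ∀ i : Fin n, ((X - C (z i)) ^ n).coeff j
      = (-1) ^ (n - j) * (n.choose j : ℂ) * z i ^ (n - j) := by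
    intro i
    rw [sub_eq_add_neg, ← C_neg, coeff_X_add_C_pow, neg_pow]
    ring
  simp_rw [this, psumv, ← Finset.mul_sum]
  ring

lemma esymv_eq_multiset_esymm {n : ℕ} (z : Fin n → ℂ) (k : ℕ) :
    esymv z k = (Multiset.map z Finset.univ.val).esymm k := by
  have := MvPolynomial.aeval_esymm_eq_multiset_esymm (σ := Fin n) (R := ℂ) (S := ℂ) k z
  rw [esymv, ← this, MvPolynomial.aeval_def, MvPolynomial.eval, Algebra.algebraMap_self]
  rfl


lemma exists_perm_of_map_univ_eq : ∀ {n : ℕ} {α : Type*} (z w : Fin n → α),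
    Multiset.map w Finset.univ.val = Multiset.map z Finset.univ.val →
    ∃ σ : Equiv.Perm (Fin n), w = z ∘ σ := by
  intro n
  induction n with
  | zero =>
    intro α z w _
    exact ⟨Equiv.refl _, funext fun i => i.elim0⟩
  | succ n ih =>
    intro α z w h
    have hw0 : w 0 ∈ Multiset.map z Finset.univ.val := by
      rw [← h]
      exact Multiset.mem_map_of_mem _ (Finset.mem_univ_val _)
    obtain ⟨j, -, hj⟩ := Multiset.mem_map.mp hw0
    set z₁ : Fin (n + 1) → α := z ∘ Equiv.swap 0 j with hz₁
    have hmap : Multiset.map z₁ Finset.univ.val = Multiset.map z Finset.univ.val := by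
      have h2 := congrArg Finset.val (Finset.map_univ_equiv (Equiv.swap 0 j))
      rw [Finset.map_val] at h2
      simp only [Equiv.coe_toEmbedding] at h2
      rw [hz₁, ← Multiset.map_map, h2]
    -- decompose univ over Fin (n+1)
    have huniv : (Finset.univ : Finset (Fin (n+1))).val
        = 0 ::ₘ Multiset.map Fin.succ (Finset.univ : Finset (Fin n)).val := by
      simp [Fin.univ_def, List.finRange_succ, Multiset.map_coe]
    have htail : Multiset.map (w ∘ Fin.succ) Finset.univ.val
        = Multiset.map (z₁ ∘ Fin.succ) Finset.univ.val := by
      have h1 : Multiset.map w (Finset.univ : Finset (Fin (n+1))).val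
          = Multiset.map z₁ (Finset.univ : Finset (Fin (n+1))).val := by
        rw [hmap, h]
      rw [huniv] at h1
      simp only [Multiset.map_cons, Multiset.map_map] at h1
      have hz10 : z₁ 0 = w 0 := by simp [hz₁, hj]
      rw [hz10] at h1
      exact (Multiset.cons_inj_right _).mp h1
    obtain ⟨σ', hσ'⟩ := ih (z₁ ∘ Fin.succ) (w ∘ Fin.succ) htail
    set ρ : Equiv.Perm (Fin (n + 1)) := Equiv.Perm.decomposeFin.symm (0, σ')
    refine ⟨ρ.trans (Equiv.swap 0 j), ?_⟩
    funext i
    simp only [Function.comp_apply, Equiv.trans_apply]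
    induction i using Fin.cases with
    | zero =>
      have : ρ 0 = 0 := Equiv.Perm.decomposeFin_symm_apply_zero 0 σ'
      rw [this]
      simp [hj]
    | succ i =>
      have : ρ i.succ = (σ' i).succ := by
        rw [show ρ i.succ = _ from Equiv.Perm.decomposeFin_symm_apply_succ σ' 0 i]
        simp
      rw [this]
      have := congrFun hσ' i
      simpa [hz₁] using this

noncomputable def eList (p : ℕ → ℂ) : ℕ → List ℂ
  | 0 => [1]
  | k + 1 => eList p k ++
      [((k + 1 : ℕ) : ℂ)⁻¹ * (-1) ^ (k + 2) *
        ∑ a ∈ (antidiagonal (k + 1)).filter (fun a => a.1 < k + 1),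
          (-1) ^ a.1 * (eList p k).getD a.1 0 * p a.2]

noncomputable def eFun (p : ℕ → ℂ) (k : ℕ) : ℂ := (eList p k).getD k 0

lemma eList_length (p : ℕ → ℂ) (k : ℕ) : (eList p k).length = k + 1 := by
  induction k with
  | zero => rfl
  | succ k ih => simp [eList, ih]

lemma eList_getD_stable (p : ℕ → ℂ) : ∀ m k, k ≤ m → (eList p m).getD k 0 = eFun p k := by
  intro m
  induction m with
  | zero => intro k hk; interval_cases k; rfl
  | succ m ih =>
    intro k hk
    rcases Nat.lt_or_ge k (m + 1) with h | h
    · show (eList p m ++ _).getD k 0 = _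
      rw [List.getD_append _ _ _ _ (by rw [eList_length]; exact h)]
      exact ih k (Nat.lt_succ_iff.mp h)
    · have hk' : k = m + 1 := le_antisymm hk h
      subst hk'
      rfl

lemma eFun_zero (p : ℕ → ℂ) : eFun p 0 = 1 := rfl

lemma eFun_newton (p : ℕ → ℂ) (k : ℕ) (hk : 1 ≤ k) :
    (k : ℂ) * eFun p k = (-1) ^ (k + 1) *
      ∑ a ∈ (antidiagonal k).filter (fun a => a.1 < k),
        (-1) ^ a.1 * eFun p a.1 * p a.2 := by
  cases k with
  | zero => omega
  | succ m =>
    have hne : ((m + 1 : ℕ) : ℂ) ≠ 0 := Nat.cast_ne_zero.mpr (Nat.succ_ne_zero m)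
    have hval : eFun p (m + 1) = ((m + 1 : ℕ) : ℂ)⁻¹ * (-1) ^ (m + 2) *
        ∑ a ∈ (antidiagonal (m + 1)).filter (fun a => a.1 < m + 1),
          (-1) ^ a.1 * eFun p a.1 * p a.2 := by
      show (eList p m ++ _).getD (m + 1) 0 = _
      rw [List.getD_append_right _ _ _ _ (by simp [eList_length]), eList_length]
      simp only [Nat.sub_self, List.getD_cons_zero]
      congr 1
      refine Finset.sum_congr rfl fun a ha => ?_
      rw [eList_getD_stable p m a.1 (by have := (mem_filter.mp ha).2; omega)]
    rw [hval]
    have h2 : (-1 : ℂ) ^ (m + 2) = (-1) ^ (m + 1 + 1) := rfl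
    rw [h2, ← mul_assoc, ← mul_assoc, mul_inv_cancel₀ (by exact_mod_cast hne), one_mul]

lemma esymv_eq_of_psumv_eq {n : ℕ} (z w : Fin n → ℂ)
    (h : ∀ k, 1 ≤ k → k ≤ n → psumv z k = psumv w k) :
    ∀ k, k ≤ n → esymv z k = esymv w k := by
  intro k
  induction k using Nat.strong_induction_on with
  | _ k ih =>
    intro hkn
    rcases Nat.eq_zero_or_pos k with rfl | hk
    · rw [esymv_zero, esymv_zero]
    · have hz := newton_eval z k
      have hw := newton_eval w k
      have hsum : ∑ a ∈ (antidiagonal k).filter (fun a => a.1 < k),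
            (-1 : ℂ) ^ a.1 * esymv z a.1 * psumv z a.2
          = ∑ a ∈ (antidiagonal k).filter (fun a => a.1 < k),
            (-1 : ℂ) ^ a.1 * esymv w a.1 * psumv w a.2 := by
        refine Finset.sum_congr rfl fun a ha => ?_
        obtain ⟨ha1, ha2⟩ := mem_filter.mp ha
        have hak : a.1 + a.2 = k := mem_antidiagonal.mp ha1
        rw [ih a.1 ha2 (by omega), h a.2 (by omega) (by omega)]
      have hkc : (k : ℂ) ≠ 0 := Nat.cast_ne_zero.mpr (by omega)
      apply mul_left_cancel₀ hkc
      rw [hz, hw, hsum]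

lemma psumv_eq_of_esymv_eq_eFun {n : ℕ} (z : Fin n → ℂ) (p : ℕ → ℂ)
    (he : ∀ k, k ≤ n → esymv z k = eFun p k) :
    ∀ k, 1 ≤ k → k ≤ n → psumv z k = p k := by
  intro k
  induction k using Nat.strong_induction_on with
  | _ k ih =>
    intro hk1 hkn
    have hz := newton_eval z k
    have hp := eFun_newton p k hk1
    rw [he k hkn] at hz
    have hS : ∑ a ∈ (antidiagonal k).filter (fun a => a.1 < k),
          (-1 : ℂ) ^ a.1 * esymv z a.1 * psumv z a.2
        = ∑ a ∈ (antidiagonal k).filter (fun a => a.1 < k),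
          (-1 : ℂ) ^ a.1 * eFun p a.1 * p a.2 := by
      have hne : ((-1 : ℂ) ^ (k + 1)) ≠ 0 := pow_ne_zero _ (by norm_num)
      apply mul_left_cancel₀ hne
      rw [← hz, ← hp]
    have hmem : ((0 : ℕ), k) ∈ (antidiagonal k).filter (fun a => a.1 < k) := by
      simp [mem_filter, HasAntidiagonal.mem_antidiagonal]; omega
    rw [Finset.sum_eq_add_sum_sdiff_singleton_of_mem hmem, Finset.sum_eq_add_sum_sdiff_singleton_of_mem hmem] at hS
    have hrest : ∑ a ∈ ((antidiagonal k).filter (fun a => a.1 < k)) \ {((0 : ℕ), k)},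
          (-1 : ℂ) ^ a.1 * esymv z a.1 * psumv z a.2
        = ∑ a ∈ ((antidiagonal k).filter (fun a => a.1 < k)) \ {((0 : ℕ), k)},
          (-1 : ℂ) ^ a.1 * eFun p a.1 * p a.2 := by
      refine Finset.sum_congr rfl fun a ha => ?_
      obtain ⟨haf, hane⟩ := Finset.mem_sdiff.mp ha
      obtain ⟨ha1, ha2⟩ := mem_filter.mp haf
      have hak : a.1 + a.2 = k := mem_antidiagonal.mp ha1
      have ha1ne : a.1 ≠ 0 := by
        intro h0
        apply Finset.notMem_singleton.mp hane
        have : a = (a.1, a.2) := rfl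
        rw [this, h0]
        simp [← hak, h0]
      rw [he a.1 (by omega), ih a.2 (by omega) (by omega) (by omega)]
    rw [hrest] at hS
    have := add_right_cancel hS
    simpa [esymv_zero, eFun_zero] using this

/-- Every monic complex polynomial of degree n is the average (1/n) Σ (X - z_i)^n,
with z_1, …, z_n unique up to order. -/
theorem monic_eq_average_of_powers (n : ℕ) (hn : 1 ≤ n)
    (f : Polynomial ℂ) (hf : f.Monic) (hdeg : f.natDegree = n) :
    ∃ z : Fin n → ℂ,
      f = Polynomial.C ((n : ℂ)⁻¹) * ∑ i, (Polynomial.X - Polynomial.C (z i)) ^ n ∧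
      ∀ w : Fin n → ℂ,
        f = Polynomial.C ((n : ℂ)⁻¹) * ∑ i, (Polynomial.X - Polynomial.C (w i)) ^ n →
        ∃ σ : Equiv.Perm (Fin n), w = z ∘ σ := by
  have hn0 : (n : ℂ) ≠ 0 := Nat.cast_ne_zero.mpr (by omega)
  -- target power sums
  set p : ℕ → ℂ := fun k => (-1) ^ k * n * f.coeff (n - k) / (n.choose k) with hp_def
  set e : ℕ → ℂ := eFun p with he_def
  -- the candidate polynomial with prescribed esymm values
  set g : Polynomial ℂ := X ^ n + ∑ k ∈ range n, C ((-1) ^ (n - k) * e (n - k)) * X ^ k with hg_def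
  have hsum_deg : (∑ k ∈ range n, C ((-1) ^ (n - k) * e (n - k)) * X ^ k).degree
      < ((n : ℕ) : WithBot ℕ) := by
    apply lt_of_le_of_lt (degree_sum_le _ _)
    rw [Finset.sup_lt_iff (by exact_mod_cast WithBot.bot_lt_coe n)]
    intro k hk
    exact lt_of_le_of_lt (degree_C_mul_X_pow_le _ _) (by exact_mod_cast mem_range.mp hk)
  have hgm : g.Monic := monic_X_pow_add hsum_deg
  have hgdeg : g.natDegree = n := by
    have hdg : g.degree = n := by
      rw [hg_def, degree_add_eq_left_of_degree_lt (by rw [degree_X_pow]; exact hsum_deg),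
        degree_X_pow]
    exact natDegree_eq_of_degree_eq_some hdg
  have hgcoeff : ∀ j, j < n → g.coeff j = (-1) ^ (n - j) * e (n - j) := by
    intro j hj
    rw [hg_def, coeff_add, coeff_X_pow, if_neg (by omega), finset_sum_coeff, zero_add]
    rw [Finset.sum_eq_single j]
    · rw [coeff_C_mul, coeff_X_pow, if_pos rfl, mul_one]
    · intro b _ hb
      rw [coeff_C_mul, coeff_X_pow, if_neg (Ne.symm hb), mul_zero]
    · intro h; exact absurd (mem_range.mpr hj) h
  -- roots of g
  have hsplits : Splits g := IsAlgClosed.splits g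
  have hcard : Multiset.card g.roots = n := by
    rw [(splits_iff_card_roots).mp hsplits, hgdeg]
  set l : List ℂ := g.roots.toList with hl_def
  have hlen : l.length = n := by rw [hl_def, Multiset.length_toList, hcard]
  set z : Fin n → ℂ := fun i => l.get (Fin.cast hlen.symm i) with hz_def
  have hofn : List.ofFn z = l := by
    apply List.ext_get (by simp [hlen])
    intro i h1 h2
    simp [hz_def]
  have hzmult : Multiset.map z Finset.univ.val = g.roots := by
    rw [Fin.univ_def]
    show Multiset.map z ↑(List.finRange n) = g.roots
    rw [Multiset.map_coe, ← List.ofFn_eq_map, hofn, hl_def, Multiset.coe_toList]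
  have hprod : g = (g.roots.map fun a => X - C a).prod := by
    have h := C_leadingCoeff_mul_prod_multiset_X_sub_C (p := g) (hcard.trans hgdeg.symm)
    rw [hgm.leadingCoeff, C_1, one_mul] at h
    exact h.symm
  have hesym : ∀ k, k ≤ n → esymv z k = e k := by
    intro k hk
    rcases Nat.eq_zero_or_pos k with rfl | hk1
    · rw [esymv_zero, he_def, eFun_zero]
    · have h1 : g.coeff (n - k) = (-1 : ℂ) ^ k * (g.roots).esymm k := by
        have h2 := Multiset.prod_X_sub_C_coeff g.roots (k := n - k) (by rw [hcard]; omega)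
        rw [← hprod] at h2
        rw [h2, hcard, Nat.sub_sub_self hk]
      have h3 : g.coeff (n - k) = (-1 : ℂ) ^ k * e k := by
        rw [hgcoeff (n - k) (by omega), Nat.sub_sub_self hk]
      rw [esymv_eq_multiset_esymm, hzmult]
      have := h1.symm.trans h3
      exact mul_left_cancel₀ (pow_ne_zero _ (by norm_num : (-1 : ℂ) ≠ 0)) this
  have hpsum : ∀ k, 1 ≤ k → k ≤ n → psumv z k = p k :=
    psumv_eq_of_esymv_eq_eFun z p (fun k hk => (hesym k hk))
  -- the representation
  have hrep : f = C ((n : ℂ)⁻¹) * ∑ i, (X - C (z i)) ^ n := by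
    ext j
    rw [coeff_C_mul, coeff_sum_pow]
    rcases lt_trichotomy j n with hj | hj | hj
    · have hchoose : ((n.choose j : ℂ)) ≠ 0 :=
        Nat.cast_ne_zero.mpr (Nat.choose_pos (le_of_lt hj)).ne'
      rw [hpsum (n - j) (by omega) (by omega), hp_def]
      simp only []
      rw [Nat.sub_sub_self (le_of_lt hj), Nat.choose_symm (le_of_lt hj)]
      have hs2 : ((-1 : ℂ)) ^ ((n - j) * 2) = 1 := by
        rw [mul_comm, pow_mul]
        norm_num
      field_simp
      linear_combination (-(f.coeff j)) * hs2
    · rw [hj, Nat.sub_self]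
      have h0 : psumv z 0 = (n : ℂ) := by simp [psumv]
      have h1 : f.coeff n = 1 := by rw [← hdeg]; exact hf.coeff_natDegree
      rw [h0, Nat.choose_self, h1]
      field_simp
      simp
    · rw [coeff_eq_zero_of_natDegree_lt (by rw [hdeg]; omega), Nat.choose_eq_zero_of_lt hj]
      simp
  refine ⟨z, hrep, ?_⟩
  intro w hw
  have hpsumw : ∀ k, 1 ≤ k → k ≤ n → psumv z k = psumv w k := by
    intro k hk1 hkn
    have hcc := congrArg (fun q => Polynomial.coeff q (n - k)) (hrep.symm.trans hw)
    simp only [coeff_C_mul, coeff_sum_pow] at hcc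
    rw [Nat.sub_sub_self hkn] at hcc
    have h1 : ((n : ℂ))⁻¹ ≠ 0 := inv_ne_zero hn0
    have h2 : ((n.choose (n - k) : ℂ)) * (-1) ^ k ≠ 0 :=
      mul_ne_zero (Nat.cast_ne_zero.mpr (Nat.choose_pos (by omega)).ne') (pow_ne_zero _ (by norm_num))
    exact mul_left_cancel₀ h2 (mul_left_cancel₀ h1 hcc)
  have hesymzw := esymv_eq_of_psumv_eq z w hpsumw
  have hprodzw : ((Multiset.map z Finset.univ.val).map fun a => X - C a).prod
      = ((Multiset.map w Finset.univ.val).map fun a => X - C a).prod := by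
    ext j
    rcases le_or_gt j n with hj | hj
    · rw [Multiset.prod_X_sub_C_coeff _ (by simpa using hj),
        Multiset.prod_X_sub_C_coeff _ (by simpa using hj)]
      have hcz : Multiset.card (Multiset.map z Finset.univ.val) = n := by simp
      have hcw : Multiset.card (Multiset.map w Finset.univ.val) = n := by simp
      rw [hcz, hcw, ← esymv_eq_multiset_esymm, ← esymv_eq_multiset_esymm,
        hesymzw (n - j) (by omega)]
    · rw [coeff_eq_zero_of_natDegree_lt, coeff_eq_zero_of_natDegree_lt]
      · rw [natDegree_multiset_prod_X_sub_C_eq_card]; simpa using hj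
      · rw [natDegree_multiset_prod_X_sub_C_eq_card]; simpa using hj
  have hroots := congrArg Polynomial.roots hprodzw
  rw [roots_multiset_prod_X_sub_C, roots_multiset_prod_X_sub_C] at hroots
  exact exists_perm_of_map_univ_eq z w hroots.symm
end

section
/- Let f(z) = z^n + a_{n-1}z^{n-1} + ⋯ + a_0 be a monic complex polynomial, set c_j = n·a_{n-j}/binom(n,j) for 1 ≤ j ≤ n, and M = max_{1 ≤ j ≤ n} |c_j|^{1/j}. If z_1, …, z_n are complex numbers with f(z) = (1/n) Σ_{i=1}^n (z - z_i)^n, then |z_i| ≤ M / sin(π/(2n)) for every i. -/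
open Polynomial

private lemma avg_filter_antidiag (k : ℕ) :
    {a ∈ Finset.HasAntidiagonal.antidiagonal k | a.1 < k} = (Finset.range k).image (fun i => (i, k - i)) := by
  ext ⟨a, b⟩
  simp only [Finset.mem_filter, Finset.HasAntidiagonal.mem_antidiagonal, Finset.mem_image, Finset.mem_range,
    Prod.mk.injEq]
  constructor
  · rintro ⟨h1, h2⟩
    exact ⟨a, h2, rfl, by omega⟩
  · rintro ⟨i, hi, rfl, rfl⟩
    omega

private lemma avg_newton_eval (n k : ℕ) (z : Fin n → ℂ) :
    (k : ℂ) * (Finset.univ.val.map z).esymm k =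
      (-1) ^ (k + 1) * ∑ i ∈ Finset.range k,
        (-1) ^ i * (Finset.univ.val.map z).esymm i * ∑ m, z m ^ (k - i) := by
  have h := congrArg (MvPolynomial.aeval z) (MvPolynomial.mul_esymm_eq_sum (Fin n) ℂ k)
  simp only [map_mul, map_natCast, map_pow, map_neg, map_one, map_sum,
    MvPolynomial.aeval_esymm_eq_multiset_esymm] at h
  rw [h, avg_filter_antidiag]
  rw [Finset.sum_image (by intro i _ j _ h; simpa using congrArg Prod.fst h)]
  congr 1
  apply Finset.sum_congr rfl
  intro i _
  simp [MvPolynomial.psum]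

private lemma avg_esymm_bound (n : ℕ) (z : Fin n → ℂ) (M : ℝ) (hM : 0 ≤ M)
    (hP : ∀ j, 1 ≤ j → j ≤ n → ‖∑ i, z i ^ j‖ ≤ M ^ j) :
    ∀ k, k ≤ n → ‖(Finset.univ.val.map z).esymm k‖ ≤ M ^ k := by
  intro k
  induction k using Nat.strong_induction_on with
  | _ k ih =>
    intro hk
    rcases Nat.eq_zero_or_pos k with rfl | hk1
    · simp [Multiset.esymm]
    have h := avg_newton_eval n k z
    have habs : (k : ℝ) * ‖(Finset.univ.val.map z).esymm k‖ ≤ (k : ℝ) * M ^ k := by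
      calc (k : ℝ) * ‖(Finset.univ.val.map z).esymm k‖
          = ‖(k : ℂ) * (Finset.univ.val.map z).esymm k‖ := by
            rw [norm_mul, Complex.norm_natCast]
        _ = ‖∑ i ∈ Finset.range k,
              (-1) ^ i * (Finset.univ.val.map z).esymm i * ∑ m, z m ^ (k - i)‖ := by
            rw [h, norm_mul, norm_pow]
            simp
        _ ≤ ∑ i ∈ Finset.range k, ‖(-1) ^ i * (Finset.univ.val.map z).esymm i * ∑ m, z m ^ (k - i)‖ := by
            exact norm_sum_le _ _
        _ ≤ ∑ i ∈ Finset.range k, M ^ k := by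
            apply Finset.sum_le_sum
            intro i hi
            rw [Finset.mem_range] at hi
            rw [norm_mul, norm_mul, norm_pow]
            simp only [norm_neg, norm_one, one_pow, one_mul]
            have h1 := ih i hi (by omega)
            have h2 := hP (k - i) (by omega) (by omega)
            calc ‖(Finset.univ.val.map z).esymm i‖ *
                  ‖∑ m, z m ^ (k - i)‖ ≤ M ^ i * M ^ (k - i) := by
                  apply mul_le_mul h1 h2 (norm_nonneg _) (pow_nonneg hM _)
              _ = M ^ k := by rw [← pow_add]; congr 1; omega
        _ = (k : ℝ) * M ^ k := by rw [Finset.sum_const, Finset.card_range, nsmul_eq_mul]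
    have hkpos : (0 : ℝ) < k := by exact_mod_cast hk1
    exact le_of_mul_le_mul_left habs hkpos

private lemma avg_geom_half (n : ℕ) :
    ∑ j ∈ Finset.range n, ((1:ℝ)/2)^(j+1) = 1 - (1/2)^n := by
  induction n with
  | zero => simp
  | succ m ih => rw [Finset.sum_range_succ, ih]; ring

private lemma avg_root_bound (n : ℕ) (z : Fin n → ℂ) (M : ℝ) (hM : 0 ≤ M)
    (hE : ∀ k, k ≤ n → ‖(Finset.univ.val.map z).esymm k‖ ≤ M ^ k) :
    ∀ i, ‖z i‖ ≤ 2 * M := by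
  intro i
  set s : Multiset ℂ := Finset.univ.val.map z with hs
  have hcard : Multiset.card s = n := by simp [hs]
  set w := z i with hw
  have hzero : ((s.map fun t => X - C t).prod).eval w = 0 := by
    rw [Polynomial.eval_multiset_prod]
    apply Multiset.prod_eq_zero
    rw [Multiset.map_map]
    exact Multiset.mem_map.2 ⟨w, Multiset.mem_map_of_mem z (Finset.mem_univ i), by simp⟩
  rw [Multiset.prod_X_sub_X_eq_sum_esymm, hcard] at hzero
  simp only [Polynomial.eval_finset_sum, Polynomial.eval_mul, Polynomial.eval_pow,
    Polynomial.eval_neg, Polynomial.eval_one, Polynomial.eval_C, Polynomial.eval_X] at hzero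
  rw [Finset.sum_range_succ'] at hzero
  have h0 : ((-1:ℂ))^0 * (s.esymm 0 * w ^ (n - 0)) = w ^ n := by
    simp [Multiset.esymm]
  rw [h0] at hzero
  have hkey : w ^ n = -∑ j ∈ Finset.range n, (-1)^(j+1) * (s.esymm (j+1) * w ^ (n - (j+1))) := by
    linear_combination hzero
  set r := ‖w‖ with hr
  have hrn : r ^ n ≤ ∑ j ∈ Finset.range n, M^(j+1) * r^(n-(j+1)) := by
    calc r ^ n = ‖w ^ n‖ := by rw [norm_pow]
      _ = ‖∑ j ∈ Finset.range n, (-1)^(j+1) * (s.esymm (j+1) * w ^ (n - (j+1)))‖ := by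
          rw [hkey, norm_neg]
      _ ≤ ∑ j ∈ Finset.range n, ‖(-1)^(j+1) * (s.esymm (j+1) * w ^ (n - (j+1)))‖ :=
          norm_sum_le _ _
      _ ≤ ∑ j ∈ Finset.range n, M^(j+1) * r^(n-(j+1)) := by
          apply Finset.sum_le_sum
          intro j hj
          rw [norm_mul, norm_mul, norm_pow, norm_pow, norm_neg, norm_one, one_pow, one_mul]
          exact mul_le_mul_of_nonneg_right (hE (j+1) (by rw [Finset.mem_range] at hj; omega))
            (pow_nonneg (norm_nonneg _) _)
  by_contra hcon
  push_neg at hcon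
  have hrpos : 0 < r := lt_of_le_of_lt (by linarith) hcon
  have hM2 : M ≤ r / 2 := by linarith
  have hsum : ∑ j ∈ Finset.range n, M^(j+1) * r^(n-(j+1)) ≤ (1 - (1/2)^n) * r^n := by
    calc ∑ j ∈ Finset.range n, M^(j+1) * r^(n-(j+1))
        ≤ ∑ j ∈ Finset.range n, (1/2)^(j+1) * r^n := by
          apply Finset.sum_le_sum
          intro j hj
          rw [Finset.mem_range] at hj
          have h1 : M^(j+1) ≤ (r/2)^(j+1) := pow_le_pow_left₀ hM hM2 _
          have hnj : (j+1) + (n-(j+1)) = n := by omega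
          have h2 : (r/2)^(j+1) * r^(n-(j+1)) = (1/2)^(j+1) * r^n := by
            calc (r/2)^(j+1) * r^(n-(j+1)) = (1/2)^(j+1) * (r^(j+1) * r^(n-(j+1))) := by
                  rw [div_pow, div_pow, one_pow]; ring
              _ = (1/2)^(j+1) * r^n := by rw [← pow_add, hnj]
          rw [← h2]
          exact mul_le_mul_of_nonneg_right h1 (pow_nonneg hrpos.le _)
      _ = (1 - (1/2)^n) * r^n := by rw [← Finset.sum_mul, avg_geom_half]
  have hlt : (1 - (1/2:ℝ)^n) * r^n < r^n := by
    have h1 : (0:ℝ) < (1/2)^n := by positivity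
    nlinarith [pow_pos hrpos n]
  linarith

/-- If the monic degree-n polynomial f is represented as (1/n) Σ (X - z_i)^n, then
|z_i| ≤ M / sin(π/(2n)), where M = max_{1≤j≤n} |c_j|^{1/j} and
c_j = n·a_{n-j}/binom(n,j). -/
theorem average_representation_bound (n : ℕ) (hn : 1 ≤ n)
    (f : Polynomial ℂ) (hf : f.Monic) (hdeg : f.natDegree = n)
    (c : Fin n → ℂ)
    (hc : ∀ j : Fin n, c j = (n : ℂ) * f.coeff (n - (j.1 + 1)) / (n.choose (j.1 + 1)))
    (M : ℝ)
    (hM : IsGreatest (Set.range fun j : Fin n =>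
      ‖c j‖ ^ ((1 : ℝ) / (j.1 + 1))) M)
    (z : Fin n → ℂ)
    (hz : f = Polynomial.C ((n : ℂ)⁻¹) * ∑ i, (Polynomial.X - Polynomial.C (z i)) ^ n) :
    ∀ i, ‖z i‖ ≤ M / Real.sin (Real.pi / (2 * n)) := by
  have hn0 : (n : ℂ) ≠ 0 := Nat.cast_ne_zero.2 (by omega)
  -- upper bound property of M
  have hub : ∀ j : Fin n, ‖c j‖ ^ ((1 : ℝ) / (j.1 + 1)) ≤ M :=
    fun j => hM.2 (Set.mem_range_self j)
  have hM0 : 0 ≤ M :=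
    le_trans (Real.rpow_nonneg (norm_nonneg _) _) (hub ⟨0, by omega⟩)
  have habsc : ∀ j : Fin n, ‖c j‖ ≤ M ^ (j.1 + 1) := by
    intro j
    have hx : ‖c j‖ =
        (‖c j‖ ^ ((1 : ℝ) / (j.1 + 1))) ^ (j.1 + 1) := by
      rw [← Real.rpow_natCast (‖c j‖ ^ ((1 : ℝ) / (j.1 + 1))) (j.1 + 1),
        ← Real.rpow_mul (norm_nonneg _)]
      rw [show ((1 : ℝ) / (j.1 + 1)) * ((j.1 + 1 : ℕ) : ℝ) = 1 by
        push_cast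
        field_simp]
      rw [Real.rpow_one]
    rw [hx]
    exact pow_le_pow_left₀ (Real.rpow_nonneg (norm_nonneg _) _) (hub j) _
  -- coefficients of f
  have hcoeff : ∀ j, 1 ≤ j → j ≤ n →
      f.coeff (n - j) = (n:ℂ)⁻¹ * ((-1)^j * (n.choose j : ℂ) * ∑ i, z i ^ j) := by
    intro j hj1 hjn
    have hw : ∀ w : ℂ, ((X - C w)^n).coeff (n-j) = (-1)^j * (n.choose j : ℂ) * w ^ j := by
      intro w
      rw [show (X - C w) = X + C (-w) by rw [map_neg, sub_eq_add_neg],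
        Polynomial.coeff_X_add_C_pow]
      rw [show n - (n - j) = j by omega, Nat.choose_symm hjn, neg_pow]
      ring
    rw [hz, Polynomial.coeff_C_mul, Polynomial.finset_sum_coeff]
    simp_rw [hw]
    rw [← Finset.mul_sum]
  -- power sums bound
  have hP : ∀ j, 1 ≤ j → j ≤ n → ‖∑ i, z i ^ j‖ ≤ M ^ j := by
    intro j hj1 hjn
    set jf : Fin n := ⟨j - 1, by omega⟩ with hjf
    have hch : ((n.choose j : ℕ) : ℂ) ≠ 0 :=
      Nat.cast_ne_zero.2 (Nat.choose_pos hjn).ne'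
    have hcval : c jf = (-1)^j * ∑ i, z i ^ j := by
      rw [hc jf]
      have hj' : jf.1 + 1 = j := by simp [hjf]; omega
      rw [hj', hcoeff j hj1 hjn]
      field_simp
    have : ‖c jf‖ = ‖∑ i, z i ^ j‖ := by
      rw [hcval, norm_mul, norm_pow, norm_neg, norm_one, one_pow, one_mul]
    rw [← this]
    have := habsc jf
    rwa [show jf.1 + 1 = j by simp [hjf]; omega] at this
  -- elementary symmetric bound and root bound
  have hE := avg_esymm_bound n z M hM0 hP
  have h2M := avg_root_bound n z M hM0 hE
  -- sin positivity
  have hnR : (1:ℝ) ≤ n := by exact_mod_cast hn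
  have hsin_pos : 0 < Real.sin (Real.pi / (2 * n)) := by
    apply Real.sin_pos_of_pos_of_lt_pi
    · positivity
    · rw [div_lt_iff₀ (by positivity)]
      nlinarith [Real.pi_pos]
  intro i
  rcases Nat.lt_or_ge n 3 with h3 | h3
  · interval_cases n
    · -- n = 1
      have h1 := hP 1 le_rfl le_rfl
      have he : (∑ m : Fin 1, z m ^ 1) = z i := by
        rw [Fin.sum_univ_one, pow_one]
        congr
        omega
      rw [he, pow_one] at h1
      rw [show Real.pi / (2 * ((1:ℕ):ℝ)) = Real.pi / 2 by norm_num,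
        Real.sin_pi_div_two, div_one]
      exact h1
    · -- n = 2
      have hp1 := hP 1 (by norm_num) (by norm_num)
      have hp2 := hP 2 (by norm_num) (by norm_num)
      rw [Fin.sum_univ_two, pow_one, pow_one] at hp1
      rw [Fin.sum_univ_two] at hp2
      have hd2 : (z 0 - z 1)^2 = 2*(z 0^2 + z 1^2) - (z 0 + z 1)^2 := by ring
      have hdsq : ‖z 0 - z 1‖ ^ 2 ≤ 3 * M^2 := by
        calc ‖z 0 - z 1‖ ^ 2 = ‖(z 0 - z 1)^2‖ := (norm_pow _ _).symm
          _ = ‖2*(z 0^2 + z 1^2) - (z 0 + z 1)^2‖ := by rw [hd2]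
          _ ≤ 2 * ‖z 0^2 + z 1^2‖ + ‖z 0 + z 1‖^2 := by
              have h := norm_add_le (2*(z 0^2 + z 1^2)) (-((z 0 + z 1)^2))
              rw [← sub_eq_add_neg, norm_neg, norm_mul, Complex.norm_two, norm_pow] at h
              exact h
          _ ≤ 3 * M^2 := by nlinarith [norm_nonneg (z 0 + z 1)]
      have hd : ‖z 0 - z 1‖ ≤ Real.sqrt 3 * M := by
        have h := Real.sqrt_le_sqrt hdsq
        rwa [Real.sqrt_sq (norm_nonneg _), show (3:ℝ) * M^2 = (Real.sqrt 3 * M)^2 by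
          rw [mul_pow, Real.sq_sqrt (by norm_num)], Real.sqrt_sq
          (by positivity)] at h
      have hbound : ‖z i‖ ≤ (M + Real.sqrt 3 * M) / 2 := by
        fin_cases i
        · show ‖z 0‖ ≤ (M + Real.sqrt 3 * M) / 2
          have h0 : ‖(z 0 + z 1) + (z 0 - z 1)‖ = 2 * ‖z 0‖ := by
            rw [show (z 0 + z 1) + (z 0 - z 1) = 2 * z 0 by ring, norm_mul, Complex.norm_two]
          have htri := norm_add_le (z 0 + z 1) (z 0 - z 1)
          rw [h0] at htri
          rw [pow_one] at hp1
          linarith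
        · show ‖z 1‖ ≤ (M + Real.sqrt 3 * M) / 2
          have h0 : ‖(z 0 + z 1) - (z 0 - z 1)‖ = 2 * ‖z 1‖ := by
            rw [show (z 0 + z 1) - (z 0 - z 1) = 2 * z 1 by ring, norm_mul, Complex.norm_two]
          have htri : ‖(z 0 + z 1) - (z 0 - z 1)‖ ≤
              ‖z 0 + z 1‖ + ‖z 0 - z 1‖ := by
            have h := norm_add_le (z 0 + z 1) (-(z 0 - z 1))
            rwa [← sub_eq_add_neg, norm_neg] at h
          rw [h0] at htri
          rw [pow_one] at hp1
          linarith
      rw [show Real.pi / (2 * ((2:ℕ):ℝ)) = Real.pi / 4 by norm_num, Real.sin_pi_div_four]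
      have hgoal : (M + Real.sqrt 3 * M) / 2 ≤ M / (Real.sqrt 2 / 2) := by
        have hs2 : (1.41:ℝ) ≤ Real.sqrt 2 := by
          have h := Real.sqrt_le_sqrt (show ((1.41:ℝ))^2 ≤ 2 by norm_num)
          rwa [Real.sqrt_sq (by norm_num)] at h
        have hs2' : Real.sqrt 2 ≤ 1.42 := by
          have h := Real.sqrt_le_sqrt (show (2:ℝ) ≤ (1.42:ℝ)^2 by norm_num)
          rwa [Real.sqrt_sq (by norm_num)] at h
        have hs3 : Real.sqrt 3 ≤ 1.74 := by
          have h := Real.sqrt_le_sqrt (show (3:ℝ) ≤ (1.74:ℝ)^2 by norm_num)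
          rwa [Real.sqrt_sq (by norm_num)] at h
        rw [div_le_div_iff₀ (by norm_num : (0:ℝ) < 2) (by positivity : (0:ℝ) < Real.sqrt 2 / 2)]
        nlinarith [hM0, hs3, hs2', hs2, Real.sqrt_nonneg 2, Real.sqrt_nonneg 3,
          mul_nonneg hM0 (mul_nonneg (sub_nonneg.2 hs3) (sub_nonneg.2 hs2')),
          mul_nonneg hM0 (sub_nonneg.2 hs3), mul_nonneg hM0 (sub_nonneg.2 hs2')]
      exact le_trans hbound hgoal
  · -- n ≥ 3
    have hhalf : Real.sin (Real.pi / (2 * n)) ≤ 1/2 := by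
      rcases Nat.eq_or_lt_of_le h3 with h4 | h4
      · rw [show (2 * (n:ℝ)) = 6 by rw [← h4]; norm_num]
        rw [Real.sin_pi_div_six]
      · calc Real.sin (Real.pi / (2 * (n:ℝ))) ≤ Real.pi / (2 * (n:ℝ)) :=
              Real.sin_le (by positivity)
          _ ≤ Real.pi / 8 := by
              apply div_le_div_of_nonneg_left Real.pi_pos.le (by norm_num)
              have : (4:ℝ) ≤ n := by exact_mod_cast h4
              linarith
          _ ≤ 1/2 := by nlinarith [Real.pi_lt_d2]
    calc ‖z i‖ ≤ 2 * M := h2M i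
      _ ≤ M / Real.sin (Real.pi / (2 * n)) := by
          rw [le_div_iff₀ hsin_pos]
          nlinarith
end

section
/- A tuple (z_1, …, z_n) of complex numbers satisfies f(z) = (1/n) Σ_{i=1}^n (z - z_i)^n (as polynomials) if and only if z_1^j + ⋯ + z_n^j = (-1)^j · n·a_{n-j}/binom(n,j) for all 1 ≤ j ≤ n. -/
open Polynomial

lemma aux_sum_neg_pow (n : ℕ) (z : Fin n → ℂ) (m : ℕ) (c : ℂ) :
    (∑ i, (-(z i)) ^ m * c) = (-1 : ℂ) ^ m * c * ∑ i, z i ^ m := by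
  rw [Finset.mul_sum]
  apply Finset.sum_congr rfl
  intro i _
  rw [neg_pow]
  ring

lemma aux_eq_iff (a b c x S : ℂ) (hb : b ≠ 0) (hc : c ≠ 0) (hsq : a * a = 1) :
    x = b⁻¹ * (a * c * S) ↔ S = a * (b * x / c) := by
  constructor
  · intro h
    rw [h]
    field_simp
    linear_combination (- S) * hsq
  · intro h
    rw [h]
    field_simp
    linear_combination (- x) * hsq

/-- For a monic degree-n polynomial f, the representation
f = (1/n) Σ (X - z_i)^n holds iff the z_i satisfy the power-sum system
z_1^j + ⋯ + z_n^j = (-1)^j · n·a_{n-j}/binom(n,j), 1 ≤ j ≤ n. -/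
theorem average_representation_iff_powerSums (n : ℕ) (hn : 1 ≤ n)
    (f : Polynomial ℂ) (hf : f.Monic) (hdeg : f.natDegree = n)
    (z : Fin n → ℂ) :
    f = Polynomial.C ((n : ℂ)⁻¹) * ∑ i, (Polynomial.X - Polynomial.C (z i)) ^ n ↔
      ∀ j : Fin n, ∑ i, z i ^ (j.1 + 1) =
        (-1 : ℂ) ^ (j.1 + 1) * ((n : ℂ) * f.coeff (n - (j.1 + 1)) / (n.choose (j.1 + 1))) := by
  have hn0 : (n : ℂ) ≠ 0 := Nat.cast_ne_zero.mpr (by omega)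
  have hg : ∀ k, (Polynomial.C ((n : ℂ)⁻¹) * ∑ i, (X - C (z i)) ^ n).coeff k
      = (n : ℂ)⁻¹ * ((-1 : ℂ) ^ (n - k) * (n.choose k : ℂ) * ∑ i, z i ^ (n - k)) := by
    intro k
    rw [coeff_C_mul, finset_sum_coeff]
    have hterm : ∀ i : Fin n, ((X - C (z i)) ^ n).coeff k
        = (-(z i)) ^ (n - k) * (n.choose k : ℂ) := fun i => by
      rw [sub_eq_add_neg, ← C_neg, coeff_X_add_C_pow]
    simp only [hterm]
    rw [aux_sum_neg_pow]
  have hsq : ∀ m : ℕ, (-1 : ℂ) ^ m * (-1 : ℂ) ^ m = 1 := by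
    intro m; rw [← mul_pow]; norm_num
  constructor
  · intro h j
    have hj1 : j.1 + 1 ≤ n := j.2
    have hch : ((n.choose (j.1 + 1)) : ℂ) ≠ 0 :=
      Nat.cast_ne_zero.mpr (Nat.choose_pos hj1).ne'
    have hc := congrArg (fun p => Polynomial.coeff p (n - (j.1 + 1))) h
    simp only [hg] at hc
    rw [show n - (n - (j.1 + 1)) = j.1 + 1 from by omega, Nat.choose_symm hj1] at hc
    exact (aux_eq_iff _ _ _ _ _ hn0 hch (hsq _)).mp hc
  · intro h
    ext k
    rw [hg]
    rcases lt_trichotomy k n with hk | hk | hk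
    · set m := n - k with hm
      have hm1 : 1 ≤ m := by omega
      have hmn : m ≤ n := by omega
      have hch : ((n.choose m) : ℂ) ≠ 0 := Nat.cast_ne_zero.mpr (Nat.choose_pos hmn).ne'
      have hj := h ⟨m - 1, by omega⟩
      simp only [show m - 1 + 1 = m from by omega] at hj
      rw [show n - m = k from by omega] at hj
      rw [← Nat.choose_symm (le_of_lt hk), ← hm]
      exact (aux_eq_iff _ _ _ _ _ hn0 hch (hsq m)).mpr hj
    · subst hk
      rw [show k - k = 0 from by omega]
      simp only [pow_zero, Nat.choose_self, Nat.cast_one, one_mul, mul_one]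
      rw [show f.coeff k = 1 from hdeg ▸ hf.coeff_natDegree]
      simp [Finset.card_fin]
      field_simp
    · rw [Polynomial.coeff_eq_zero_of_natDegree_lt (by omega : f.natDegree < k)]
      rw [Nat.choose_eq_zero_of_lt hk]
      simp
end

section
/- The sequence defined by D_1 = 1 and D_{n+1} = 1 + (1 + D_n^{n+1})^{1/(n+1)} satisfies lim_{n→∞} D_n / n = 1. -/
open Filter

private lemma rpow_pow_inv {x : ℝ} (hx : 0 ≤ x) {m : ℕ} (hm : 1 ≤ m) :
    (x ^ m) ^ ((1 : ℝ) / m) = x := by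
  have hm' : (m : ℝ) ≠ 0 := by positivity
  rw [← Real.rpow_natCast x m, ← Real.rpow_mul hx, mul_one_div, div_self hm', Real.rpow_one]

private lemma bernoulli_root {a : ℝ} (ha : 0 ≤ a) {m : ℕ} (hm : 1 ≤ m) :
    (1 + a) ^ ((1 : ℝ) / m) ≤ 1 + a / m := by
  have hm0 : (0 : ℝ) < m := by positivity
  have hd : (0 : ℝ) ≤ a / m := by positivity
  have h1 : (1 : ℝ) + a ≤ (1 + a / m) ^ m := by
    have h := one_add_mul_le_pow (a := a / m) (by linarith) m
    rwa [mul_div_cancel₀ a hm0.ne'] at h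
  calc (1 + a) ^ ((1 : ℝ) / m)
      ≤ ((1 + a / m) ^ m) ^ ((1 : ℝ) / m) :=
        Real.rpow_le_rpow (by positivity) h1 (by positivity)
    _ = 1 + a / m := rpow_pow_inv (by linarith) hm

private lemma nat_pow_bound {n : ℕ} (hn : 1 ≤ n) : 2 ^ n ≤ (n + 1) * n ^ n := by
  obtain rfl | h2 := hn.eq_or_lt
  · decide
  · calc 2 ^ n ≤ n ^ n := Nat.pow_le_pow_left h2 n
      _ ≤ (n + 1) * n ^ n := Nat.le_mul_of_pos_left _ (by omega)

/-- For the sequence D_1 = 1, D_{n+1} = 1 + (1 + D_n^{n+1})^{1/(n+1)},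
we have lim_{n→∞} D_n / n = 1. -/
theorem D_div_n_tendsto_one (D : ℕ → ℝ) (hD1 : D 1 = 1)
    (hDrec : ∀ n, 1 ≤ n → D (n + 1) = 1 + (1 + D n ^ (n + 1)) ^ ((1 : ℝ) / (n + 1))) :
    Tendsto (fun n : ℕ => D n / n) atTop (nhds 1) := by
  -- lower bound: n ≤ D n for n ≥ 1
  have hlow : ∀ n : ℕ, 1 ≤ n → (n : ℝ) ≤ D n := by
    intro n hn
    induction n, hn using Nat.le_induction with
    | base => simp [hD1]
    | succ n hn ih =>
      have hDpos : (0 : ℝ) ≤ D n := le_trans (by positivity) ih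
      have hcollapse : (D n ^ (n + 1)) ^ ((1 : ℝ) / (n + 1)) = D n := by
        have := rpow_pow_inv hDpos (m := n + 1) (by omega)
        push_cast at this ⊢
        exact this
      have key : D n ≤ (1 + D n ^ (n + 1)) ^ ((1 : ℝ) / (n + 1)) := by
        calc D n = (D n ^ (n + 1)) ^ ((1 : ℝ) / (n + 1)) := hcollapse.symm
          _ ≤ (1 + D n ^ (n + 1)) ^ ((1 : ℝ) / (n + 1)) :=
              Real.rpow_le_rpow (by positivity) (by linarith) (by positivity)
      rw [hDrec n hn]
      push_cast
      have hn' : (n : ℝ) ≤ D n := ih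
      linarith
  -- upper bound: D n + (1/2)^(n-1) ≤ n + 1 for n ≥ 1
  have hup : ∀ n : ℕ, 1 ≤ n → D n + (1 / 2 : ℝ) ^ (n - 1) ≤ n + 1 := by
    intro n hn
    induction n, hn using Nat.le_induction with
    | base => simp [hD1]
    | succ n hn ih =>
      have h1D : (1 : ℝ) ≤ D n := le_trans (by exact_mod_cast hn) (hlow n hn)
      have hDpos : (0 : ℝ) < D n := by linarith
      have hstep : D (n + 1) ≤ 1 + D n + (1 / 2 : ℝ) ^ n := by
        rw [hDrec n hn]
        have hpow : (0 : ℝ) < D n ^ (n + 1) := by positivity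
        have hcollapse : (D n ^ (n + 1)) ^ ((1 : ℝ) / (↑n + 1)) = D n := by
          have := rpow_pow_inv hDpos.le (m := n + 1) (by omega)
          push_cast at this ⊢
          exact this
        have hsplit : (1 : ℝ) + D n ^ (n + 1) = D n ^ (n + 1) * (1 + (D n ^ (n + 1))⁻¹) := by
          field_simp
          ring
        have hmul : (1 + D n ^ (n + 1)) ^ ((1 : ℝ) / (↑n + 1))
            = D n * (1 + (D n ^ (n + 1))⁻¹) ^ ((1 : ℝ) / (↑n + 1)) := by
          rw [hsplit, Real.mul_rpow (by positivity) (by positivity), hcollapse]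
        have hb : (1 + (D n ^ (n + 1))⁻¹) ^ ((1 : ℝ) / (↑n + 1))
            ≤ 1 + (D n ^ (n + 1))⁻¹ / (↑n + 1) := by
          have := bernoulli_root (a := (D n ^ (n + 1))⁻¹) (by positivity) (m := n + 1)
            (by omega)
          push_cast at this
          exact this
        have hx : D n * (D n ^ (n + 1))⁻¹ = (D n ^ n)⁻¹ := by
          rw [pow_succ, mul_inv]
          field_simp
        have h2 : D n * (1 + (D n ^ (n + 1))⁻¹ / (↑n + 1))
            = D n + (D n ^ n)⁻¹ / (↑n + 1) := by
          rw [mul_add, mul_one, ← mul_div_assoc, hx]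
        have hA : (2 : ℝ) ^ n ≤ ((n : ℝ) + 1) * D n ^ n := by
          have h2n : (2 : ℝ) ^ n ≤ ((n : ℝ) + 1) * (n : ℝ) ^ n := by
            exact_mod_cast nat_pow_bound hn
          have hnn : ((n : ℝ) + 1) * (n : ℝ) ^ n ≤ ((n : ℝ) + 1) * D n ^ n := by
            have := pow_le_pow_left₀ (by positivity) (hlow n hn) n
            have hp : (0 : ℝ) ≤ (n : ℝ) + 1 := by positivity
            nlinarith
          linarith
        have h3 : (D n ^ n)⁻¹ / (↑n + 1) ≤ (1 / 2 : ℝ) ^ n := by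
          have hhalf : (1 / 2 : ℝ) ^ n = ((2 : ℝ) ^ n)⁻¹ := by
            rw [one_div, inv_pow]
          rw [hhalf, div_eq_mul_inv, ← mul_inv]
          apply inv_anti₀ (by positivity)
          nlinarith
        have hbnn : (0 : ℝ) ≤ D n := hDpos.le
        calc 1 + (1 + D n ^ (n + 1)) ^ ((1 : ℝ) / (↑n + 1))
            = 1 + D n * (1 + (D n ^ (n + 1))⁻¹) ^ ((1 : ℝ) / (↑n + 1)) := by rw [hmul]
          _ ≤ 1 + D n * (1 + (D n ^ (n + 1))⁻¹ / (↑n + 1)) := by nlinarith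
          _ = 1 + (D n + (D n ^ n)⁻¹ / (↑n + 1)) := by rw [h2]
          _ ≤ 1 + D n + (1 / 2 : ℝ) ^ n := by linarith
      have hhalfeq : (1 / 2 : ℝ) ^ (n + 1 - 1) = (1 / 2 : ℝ) ^ n := by norm_num
      have hprev : (1 / 2 : ℝ) ^ (n - 1) = 2 * (1 / 2 : ℝ) ^ n := by
        obtain ⟨k, rfl⟩ := Nat.exists_eq_add_of_le hn
        simp [pow_succ]
        ring
      rw [hhalfeq]
      push_cast
      push_cast at ih
      rw [hprev] at ih
      linarith
  -- squeeze
  have h0 : Tendsto (fun n : ℕ => 1 / (n : ℝ)) atTop (nhds 0) :=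
    tendsto_one_div_atTop_nhds_zero_nat
  have hub : Tendsto (fun n : ℕ => 1 + 1 / (n : ℝ)) atTop (nhds 1) := by
    have := (tendsto_const_nhds : Tendsto (fun _ : ℕ => (1 : ℝ)) atTop (nhds 1)).add h0
    simpa using this
  apply tendsto_of_tendsto_of_tendsto_of_le_of_le' (tendsto_const_nhds) hub
  · filter_upwards [eventually_ge_atTop 1] with n hn
    have hn0 : (0 : ℝ) < n := by exact_mod_cast hn
    rw [le_div_iff₀ hn0]
    simpa using hlow n hn
  · filter_upwards [eventually_ge_atTop 1] with n hn
    have hn0 : (0 : ℝ) < n := by exact_mod_cast hn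
    rw [div_le_iff₀ hn0]
    have h := hup n hn
    have hh : (0 : ℝ) ≤ (1 / 2 : ℝ) ^ (n - 1) := by positivity
    calc D n ≤ (n : ℝ) + 1 := by linarith
      _ = (1 + 1 / n) * n := by field_simp
end

section
/- Let n ≥ 1, let z_1, …, z_{n!} ∈ ℂ, let ξ = exp(2πi/(n+1)) and K ∈ ℂ, and define w_{k,l} = z_k + ξ^l K for 1 ≤ k ≤ n! and 0 ≤ l ≤ n. Then for every 1 ≤ j ≤ n, (1/(n+1)!) Σ_{k,l} w_{k,l}^j = (1/n!) Σ_{k=1}^{n!} z_k^j, and (1/(n+1)!) Σ_{k,l} w_{k,l}^{n+1} = K^{n+1} + (1/n!) Σ_{k=1}^{n!} z_k^{n+1}. -/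
open Finset

/-- For w_{k,l} = z_k + ξ^l K with ξ = exp(2πi/(n+1)): the first n normalized power
sums of the w's equal those of the z's, and the (n+1)-th one is shifted by K^{n+1}. -/
theorem w_power_sums (n : ℕ) (hn : 1 ≤ n) (z : Fin (Nat.factorial n) → ℂ)
    (ξ K : ℂ) (hξ : ξ = Complex.exp (2 * Real.pi * Complex.I / (n + 1))) :
    (∀ j : ℕ, 1 ≤ j → j ≤ n →
      (1 / (Nat.factorial (n + 1) : ℂ)) *
          ∑ k, ∑ l ∈ Finset.range (n + 1), (z k + ξ ^ l * K) ^ j =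
        (1 / (Nat.factorial n : ℂ)) * ∑ k, z k ^ j) ∧
    (1 / (Nat.factorial (n + 1) : ℂ)) *
        ∑ k, ∑ l ∈ Finset.range (n + 1), (z k + ξ ^ l * K) ^ (n + 1) =
      K ^ (n + 1) + (1 / (Nat.factorial n : ℂ)) * ∑ k, z k ^ (n + 1) := by
  have hprim : IsPrimitiveRoot ξ (n + 1) := by
    have := Complex.isPrimitiveRoot_exp (n + 1) (Nat.succ_ne_zero n)
    rw [hξ]
    convert this using 3
    push_cast; ring
  have hpow1 : ξ ^ (n + 1) = 1 := hprim.pow_eq_one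
  -- geometric sum vanishing
  have hsum0 : ∀ i : ℕ, 1 ≤ i → i ≤ n →
      ∑ l ∈ Finset.range (n + 1), (ξ ^ i) ^ l = 0 := by
    intro i h1 h2
    have hx : ξ ^ i ≠ 1 := hprim.pow_ne_one_of_pos_of_lt (by omega) (by omega)
    have hxp : (ξ ^ i) ^ (n + 1) = 1 := by
      rw [← pow_mul, mul_comm, pow_mul, hpow1, one_pow]
    rw [geom_sum_eq hx]
    simp [hxp]
  -- expansion
  have expand : ∀ j : ℕ, ∀ x : ℂ,
      ∑ l ∈ Finset.range (n + 1), (x + ξ ^ l * K) ^ j =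
      ∑ i ∈ Finset.range (j + 1),
        x ^ i * K ^ (j - i) * (j.choose i : ℂ) *
          ∑ l ∈ Finset.range (n + 1), (ξ ^ (j - i)) ^ l := by
    intro j x
    have : ∀ l, (x + ξ ^ l * K) ^ j =
        ∑ i ∈ Finset.range (j + 1),
          x ^ i * K ^ (j - i) * (j.choose i : ℂ) * (ξ ^ (j - i)) ^ l := by
      intro l
      rw [add_pow]
      refine Finset.sum_congr rfl fun i _ => ?_
      rw [mul_pow, ← pow_mul, mul_comm l (j - i), pow_mul]
      ring
    rw [Finset.sum_congr rfl fun l _ => this l, Finset.sum_comm]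
    refine Finset.sum_congr rfl fun i _ => ?_
    rw [Finset.mul_sum]
  have hfac : (Nat.factorial n : ℂ) ≠ 0 := by
    exact_mod_cast Nat.factorial_ne_zero n
  have hfac1 : (Nat.factorial (n + 1) : ℂ) = ((n : ℂ) + 1) * (Nat.factorial n : ℂ) := by
    rw [Nat.factorial_succ]; push_cast; ring
  have hM : ((n : ℂ) + 1) ≠ 0 := by
    have : ((n : ℕ) + 1 : ℂ) ≠ 0 := by exact_mod_cast Nat.succ_ne_zero n
    push_cast at this; exact this
  constructor
  · intro j hj1 hj2
    have inner : ∀ x : ℂ, ∑ l ∈ Finset.range (n + 1), (x + ξ ^ l * K) ^ j =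
        ((n : ℂ) + 1) * x ^ j := by
      intro x
      rw [expand j x]
      rw [Finset.sum_eq_single j]
      · simp; ring
      · intro i hi hij
        have hi' : i < j + 1 := Finset.mem_range.mp hi
        have h1 : 1 ≤ j - i := by omega
        have h2 : j - i ≤ n := by omega
        rw [hsum0 _ h1 h2, mul_zero]
      · intro h; exact absurd (Finset.self_mem_range_succ j) h
    rw [Finset.sum_congr rfl fun k _ => inner (z k), ← Finset.mul_sum, hfac1]
    field_simp
  · have inner : ∀ x : ℂ, ∑ l ∈ Finset.range (n + 1), (x + ξ ^ l * K) ^ (n + 1) =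
        ((n : ℂ) + 1) * K ^ (n + 1) + ((n : ℂ) + 1) * x ^ (n + 1) := by
      intro x
      rw [expand (n + 1) x]
      rw [show Finset.range (n + 1 + 1) = insert 0 (Finset.Ioc 0 (n + 1)) by
        ext i
        simp only [Finset.mem_range, Finset.mem_insert, Finset.mem_Ioc]
        omega]
      rw [Finset.sum_insert (by simp)]
      rw [show Finset.Ioc 0 (n + 1) = insert (n + 1) (Finset.Ioo 0 (n + 1)) by
        ext i; simp only [Finset.mem_insert, Finset.mem_Ioo, Finset.mem_Ioc]; omega]
      rw [Finset.sum_insert (by simp)]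
      have hrest : ∑ i ∈ Finset.Ioo 0 (n + 1),
          x ^ i * K ^ (n + 1 - i) * ((n + 1).choose i : ℂ) *
            ∑ l ∈ Finset.range (n + 1), (ξ ^ (n + 1 - i)) ^ l = 0 := by
        refine Finset.sum_eq_zero fun i hi => ?_
        rw [Finset.mem_Ioo] at hi
        rw [hsum0 (n + 1 - i) (by omega) (by omega), mul_zero]
      rw [hrest]
      simp only [Nat.sub_zero, pow_zero, Nat.sub_self, hpow1, one_pow,
        Nat.choose_self, Nat.choose_zero_right, Nat.cast_one, Finset.sum_const,
        Finset.card_range, nsmul_eq_mul, mul_one, one_mul, add_zero]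
      push_cast
      ring
    rw [Finset.sum_congr rfl fun k _ => inner (z k), Finset.sum_add_distrib,
      Finset.sum_const, ← Finset.mul_sum, hfac1]
    simp only [Finset.card_univ, Fintype.card_fin, nsmul_eq_mul]
    field_simp
end

section
/- For every n ≥ 1, every m ≥ n, and all complex numbers A_1, …, A_n, the system (1/m)(z_1^j + ⋯ + z_m^j) = A_j^j, 1 ≤ j ≤ n, has a solution (z_1, …, z_m) ∈ ℂ^m. -/
open Finset Polynomial

/-- Recursive solution of Newton's identities for the elementary symmetric values,
given target power sums `p`. -/
private noncomputable def esolve (p : ℕ → ℂ) : ℕ → ℂ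
  | 0 => 1
  | (k+1) => ((-1:ℂ))^k / (k+1) *
      ∑ i ∈ (Finset.range (k+1)).attach,
        (-1:ℂ)^(i:ℕ) * esolve p i * p (k+1-(i:ℕ))
decreasing_by exact Finset.mem_range.mp i.2

private lemma esolve_spec (p : ℕ → ℂ) (k : ℕ) (hk : 1 ≤ k) :
    (k:ℂ) * esolve p k = (-1:ℂ)^(k+1) *
      ∑ i ∈ Finset.range k, (-1:ℂ)^i * esolve p i * p (k-i) := by
  obtain ⟨K, rfl⟩ := Nat.exists_eq_add_of_le hk
  rw [show 1 + K = K + 1 by omega, esolve]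
  rw [Finset.sum_attach (Finset.range (K+1)) (fun i => (-1:ℂ)^i * esolve p i * p (K+1-i))]
  have h1 : ((K:ℂ)+1) ≠ 0 := Nat.cast_add_one_ne_zero K
  have h2 : ((-1:ℂ))^(K+1+1) = (-1:ℂ)^K := by
    rw [pow_succ, pow_succ]; ring
  push_cast
  rw [h2]
  field_simp

/-- Any prescribed values of the elementary symmetric functions can be realized by
`m` complex numbers (fundamental theorem of algebra). -/
private lemma exists_esymm_eq (m : ℕ) (e : ℕ → ℂ) :
    ∃ z : Fin m → ℂ, ∀ k, 1 ≤ k → k ≤ m →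
      (Multiset.map z Finset.univ.val).esymm k = e k := by
  rcases Nat.eq_zero_or_pos m with rfl | hm
  · exact ⟨fun i => 0, by omega⟩
  set Q : Polynomial ℂ :=
    X^m + ∑ j ∈ Finset.range m, C ((-1:ℂ)^(m-j) * e (m-j)) * X^j with hQ
  have hdeglt : (∑ j ∈ Finset.range m, C ((-1:ℂ)^(m-j) * e (m-j)) * X^j).degree < (m : WithBot ℕ) := by
    apply lt_of_le_of_lt (Polynomial.degree_sum_le _ _)
    rw [Finset.sup_lt_iff (by exact_mod_cast WithBot.bot_lt_coe m)]
    intro j hj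
    exact lt_of_le_of_lt (Polynomial.degree_C_mul_X_pow_le _ _)
      (by exact_mod_cast Finset.mem_range.mp hj)
  have hmonic : Q.Monic := Polynomial.monic_X_pow_add hdeglt
  have hdeg : Q.degree = m := by
    rw [hQ, Polynomial.degree_add_eq_left_of_degree_lt
      (by rwa [Polynomial.degree_X_pow]), Polynomial.degree_X_pow]
  have hnd : Q.natDegree = m := Polynomial.natDegree_eq_of_degree_eq_some hdeg
  have hcoeff : ∀ k, k < m → Q.coeff k = (-1:ℂ)^(m-k) * e (m-k) := by
    intro k hk
    rw [hQ, Polynomial.coeff_add, Polynomial.coeff_X_pow, if_neg (by omega),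
      Polynomial.finset_sum_coeff, zero_add]
    simp only [Polynomial.coeff_C_mul, Polynomial.coeff_X_pow]
    rw [Finset.sum_eq_single k]
    · simp
    · intro j hj hne; simp [Ne.symm hne]
    · intro h; exact absurd (Finset.mem_range.mpr hk) h
  have hcard : Multiset.card Q.roots = m := by
    rw [← hnd]
    exact Polynomial.splits_iff_card_roots.mp (IsAlgClosed.splits Q)
  have hesymm : ∀ k, 1 ≤ k → k ≤ m → Q.roots.esymm k = e k := by
    intro k h1 h2
    have h3 : m - k ≤ Q.natDegree := by omega
    have hco := Polynomial.coeff_eq_esymm_roots_of_card (by rw [hnd]; exact hcard) h3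
    rw [hmonic.leadingCoeff, one_mul, hnd, show m - (m - k) = k by omega] at hco
    rw [hcoeff (m-k) (by omega), show m - (m - k) = k by omega] at hco
    exact mul_left_cancel₀ (pow_ne_zero k (neg_ne_zero.mpr (one_ne_zero))) hco.symm
  -- enumerate the roots
  have hgen : ∀ (l : List ℂ) (h : l.length = m),
      Multiset.map (fun i : Fin m => l.get (Fin.cast h.symm i)) Finset.univ.val = (l : Multiset ℂ) := by
    intro l h
    subst h
    have hfun : (fun i : Fin l.length => l.get (Fin.cast rfl.symm i)) = l.get := by
      funext i; congr 1
    rw [hfun, Fin.univ_def]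
    show Multiset.map l.get (List.finRange l.length : Multiset (Fin l.length)) = _
    rw [Multiset.map_coe, List.map_get_finRange]
  have hlen : Q.roots.toList.length = m := by rw [Multiset.length_toList, hcard]
  refine ⟨fun i => Q.roots.toList.get (Fin.cast hlen.symm i), fun k h1 h2 => ?_⟩
  rw [hgen Q.roots.toList hlen, Multiset.coe_toList]
  exact hesymm k h1 h2

private lemma sum_filter_antidiagonal (k : ℕ) (f : ℕ → ℕ → ℂ) :
    ∑ a ∈ Finset.HasAntidiagonal.antidiagonal k with a.1 ∈ Set.Ioo 0 k, f a.1 a.2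
      = ∑ i ∈ Finset.Ioo 0 k, f i (k - i) := by
  classical
  rw [Finset.sum_filter, Finset.Nat.sum_antidiagonal_eq_sum_range_succ_mk, ← Finset.sum_filter]
  apply Finset.sum_congr _ (fun _ _ => rfl)
  ext a
  simp only [Finset.mem_filter, Finset.mem_range, Set.mem_Ioo, Finset.mem_Ioo]
  omega

/-- For m ≥ n ≥ 1, the system (1/m)(z_1^j + ⋯ + z_m^j) = A_j^j, 1 ≤ j ≤ n,
has a solution in ℂ^m. -/
theorem powerSum_system_underdetermined (n m : ℕ) (hn : 1 ≤ n) (hm : n ≤ m)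
    (A : Fin n → ℂ) :
    ∃ z : Fin m → ℂ,
      ∀ j : Fin n, (1 / (m : ℂ)) * ∑ k, z k ^ (j.1 + 1) = A j ^ (j.1 + 1) := by
  have hm0 : (m : ℂ) ≠ 0 := Nat.cast_ne_zero.mpr (by omega)
  set p : ℕ → ℂ := fun j => if h : j - 1 < n then (m:ℂ) * A ⟨j-1, h⟩ ^ j else 0 with hp
  obtain ⟨z, hz⟩ := exists_esymm_eq m (esolve p)
  have hE : ∀ j, j ≤ m →
      MvPolynomial.aeval z (MvPolynomial.esymm (Fin m) ℂ j) = esolve p j := by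
    intro j hj
    rw [MvPolynomial.aeval_esymm_eq_multiset_esymm]
    rcases Nat.eq_zero_or_pos j with rfl | hj1
    · rw [esolve]; simp [Multiset.esymm]
    · exact hz j hj1 hj
  have hPs : ∀ j, MvPolynomial.aeval z (MvPolynomial.psum (Fin m) ℂ j) = ∑ i, z i ^ j := by
    intro j; simp [MvPolynomial.psum]
  have key : ∀ k, 1 ≤ k → k ≤ n → (∑ i, z i ^ k) = p k := by
    intro k
    induction k using Nat.strong_induction_on with
    | _ k IH =>
      intro h1 h2
      have newton := congrArg (MvPolynomial.aeval z)
        (MvPolynomial.psum_eq_mul_esymm_sub_sum (Fin m) ℂ k (by omega))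
      rw [map_sub, map_mul, map_mul, map_pow, map_neg, map_one, map_natCast,
        hPs, hE k (by omega), map_sum] at newton
      have hterm : ∀ a ∈ (Finset.HasAntidiagonal.antidiagonal k).filter (fun a => a.1 ∈ Set.Ioo 0 k),
          MvPolynomial.aeval z
            ((-1)^a.1 * MvPolynomial.esymm (Fin m) ℂ a.1 * MvPolynomial.psum (Fin m) ℂ a.2)
            = (-1:ℂ)^a.1 * esolve p a.1 * p a.2 := by
        intro a ha
        rw [Finset.mem_filter] at ha
        obtain ⟨ha1, ha2⟩ := ha
        rw [Finset.HasAntidiagonal.mem_antidiagonal] at ha1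
        rw [Set.mem_Ioo] at ha2
        rw [map_mul, map_mul, map_pow, map_neg, map_one, hE a.1 (by omega), hPs]
        rw [IH a.2 (by omega) (by omega) (by omega)]
      rw [Finset.sum_congr rfl hterm, sum_filter_antidiagonal k
        (fun i j => (-1:ℂ)^i * esolve p i * p j)] at newton
      have hspec := esolve_spec p k h1
      have hsplit : ∑ i ∈ Finset.range k, (-1:ℂ)^i * esolve p i * p (k-i)
          = p k + ∑ i ∈ Finset.Ioo 0 k, (-1:ℂ)^i * esolve p i * p (k-i) := by
        rw [Finset.sum_eq_add_sum_sdiff_singleton_of_mem (Finset.mem_range.mpr (by omega : 0 < k))]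
        rw [esolve]
        congr 1
        · simp
        · apply Finset.sum_congr _ (fun _ _ => rfl)
          ext a
          simp only [Finset.mem_sdiff, Finset.mem_range, Finset.mem_singleton, Finset.mem_Ioo]
          omega
      rw [hsplit] at hspec
      have hsq : ((-1:ℂ))^(k+1) * ((-1:ℂ))^(k+1) = 1 := by
        rw [← pow_add]; exact Even.neg_one_pow ⟨k+1, by ring⟩
      rw [newton, mul_assoc, hspec, ← mul_assoc, hsq, one_mul]
      ring
  refine ⟨z, fun j => ?_⟩
  have := key (j.1 + 1) (by omega) (by omega)
  rw [this, hp]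
  simp only [Nat.add_sub_cancel]
  rw [dif_pos j.2]
  rw [show (⟨j.1, j.2⟩ : Fin n) = j from rfl]
  field_simp
end
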